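/- Let (X,μ,S,T) be an ergodic measure preserving system with commuting transformations S and T, let f1, f2 ∈ L∞(μ), and let f3 ∈ L∞(μ) be measurable with respect to the σ-algebra I_S ∨ I_T. Then the averages (1/N²) Σ_{i=0}^{N-1} Σ_{j=0}^{N-1} f1(S^i x) f2(T^j x) f3(S^i T^j x) converge for μ-almost every x ∈ X as N → ∞. -/

import Mathlib

open MeasureTheory Filter Set

/-- The σ-algebra of `R`-invariant measurable sets. -/
def invSigma {X : Type*} [MeasurableSpace X] (R : X → X) : MeasurableSpace X where
  MeasurableSet' s := MeasurableSet s ∧ R ⁻¹' s = s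
  measurableSet_empty := ⟨MeasurableSet.empty, rfl⟩
  measurableSet_compl s hs := ⟨hs.1.compl, by rw [Set.preimage_compl, hs.2]⟩
  measurableSet_iUnion f hf := ⟨MeasurableSet.iUnion fun i => (hf i).1, by
    rw [Set.preimage_iUnion]; exact Set.iUnion_congr fun i => (hf i).2⟩


section RealSeq

private lemma bdd_above_of_abs {a : ℕ → ℝ} {C : ℝ} (ha : ∀ n, |a n| ≤ C) :
    IsBoundedUnder (· ≤ ·) atTop a :=
  isBoundedUnder_of ⟨C, fun n => (abs_le.1 (ha n)).2⟩

private lemma bdd_below_of_abs {a : ℕ → ℝ} {C : ℝ} (ha : ∀ n, |a n| ≤ C) :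
    IsBoundedUnder (· ≥ ·) atTop a :=
  isBoundedUnder_of ⟨-C, fun n => (abs_le.1 (ha n)).1⟩

private lemma limsup_le_of_near {a b : ℕ → ℝ} {C : ℝ} (ha : ∀ n, |a n| ≤ C)
    (hb : ∀ n, |b n| ≤ C) (h : ∀ ε > (0:ℝ), ∀ᶠ n in atTop, b n ≤ a n + ε) :
    limsup b atTop ≤ limsup a atTop := by
  by_contra hlt
  push_neg at hlt
  set ε := (limsup b atTop - limsup a atTop) / 2 with hε
  have hε0 : 0 < ε := by simp only [hε]; linarith
  have h2 : limsup b atTop ≤ limsup (fun n => a n + ε) atTop := by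
    refine limsup_le_limsup (h ε hε0) ?_ ?_
    · exact (bdd_below_of_abs hb).isCoboundedUnder_le
    · exact isBoundedUnder_of ⟨C + ε, fun n => by have := (abs_le.1 (ha n)).2; linarith⟩
  rw [limsup_add_const atTop a ε (bdd_above_of_abs ha) (bdd_below_of_abs ha).isCoboundedUnder_le] at h2
  simp only [hε] at h2
  linarith

private lemma limsup_eq_of_tendsto_sub {a b : ℕ → ℝ} {C : ℝ} (ha : ∀ n, |a n| ≤ C)
    (hb : ∀ n, |b n| ≤ C) (h : Tendsto (fun n => b n - a n) atTop (nhds 0)) :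
    limsup b atTop = limsup a atTop := by
  have hev : ∀ ε > (0:ℝ), ∀ᶠ n in atTop, |b n - a n| ≤ ε := by
    intro ε hε
    have := h.eventually (Metric.ball_mem_nhds (0:ℝ) hε)
    filter_upwards [this] with n hn
    exact le_of_lt (by simpa [Real.dist_eq] using hn)
  apply le_antisymm
  · exact limsup_le_of_near ha hb fun ε hε => by
      filter_upwards [hev ε hε] with n hn; have := (abs_le.1 hn).2; linarith
  · exact limsup_le_of_near hb ha fun ε hε => by
      filter_upwards [hev ε hε] with n hn; have := (abs_le.1 hn).1; linarith

private lemma le_liminf_of_near {a b : ℕ → ℝ} {C : ℝ} (ha : ∀ n, |a n| ≤ C)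
    (hb : ∀ n, |b n| ≤ C) (h : ∀ ε > (0:ℝ), ∀ᶠ n in atTop, a n - ε ≤ b n) :
    liminf a atTop ≤ liminf b atTop := by
  by_contra hlt
  push_neg at hlt
  set ε := (liminf a atTop - liminf b atTop) / 2 with hε
  have hε0 : 0 < ε := by simp only [hε]; linarith
  have h2 : liminf (fun n => a n + -ε) atTop ≤ liminf b atTop := by
    refine liminf_le_liminf ?_ ?_ ?_
    · filter_upwards [h ε hε0] with n hn; linarith
    · exact isBoundedUnder_of ⟨-C - ε, fun n => by have := (abs_le.1 (ha n)).1; linarith⟩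
    · exact (bdd_above_of_abs hb).isCoboundedUnder_ge
  rw [liminf_add_const atTop a (-ε) (bdd_above_of_abs ha).isCoboundedUnder_ge (bdd_below_of_abs ha)] at h2
  simp only [hε] at h2
  linarith

private lemma liminf_eq_of_tendsto_sub {a b : ℕ → ℝ} {C : ℝ} (ha : ∀ n, |a n| ≤ C)
    (hb : ∀ n, |b n| ≤ C) (h : Tendsto (fun n => b n - a n) atTop (nhds 0)) :
    liminf b atTop = liminf a atTop := by
  have hev : ∀ ε > (0:ℝ), ∀ᶠ n in atTop, |b n - a n| ≤ ε := by
    intro ε hε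
    have := h.eventually (Metric.ball_mem_nhds (0:ℝ) hε)
    filter_upwards [this] with n hn
    exact le_of_lt (by simpa [Real.dist_eq] using hn)
  apply le_antisymm
  · exact le_liminf_of_near hb ha fun ε hε => by
      filter_upwards [hev ε hε] with n hn; have := (abs_le.1 hn).2; linarith
  · exact le_liminf_of_near ha hb fun ε hε => by
      filter_upwards [hev ε hε] with n hn; have := (abs_le.1 hn).1; linarith

end RealSeq

set_option linter.unusedSectionVars false
section Birkhoff

variable {X : Type*} [MeasurableSpace X] {μ : Measure X} [IsProbabilityMeasure μ]
variable {R : X → X}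

private lemma nonempty_of_prob (μ : Measure X) [IsProbabilityMeasure μ] : Nonempty X := by
  rcases isEmpty_or_nonempty X with h|h
  · exfalso
    have h1 : μ Set.univ = 1 := measure_univ
    rw [Set.univ_eq_empty_iff.2 h, measure_empty] at h1
    exact zero_ne_one h1
  · exact h

private lemma integrable_of_bdd {f : X → ℝ} {C : ℝ} (hf : Measurable f)
    (hb : ∀ x, |f x| ≤ C) : Integrable f μ :=
  ⟨hf.aestronglyMeasurable, HasFiniteIntegral.of_bounded (C := C) (ae_of_all _ fun x => by
    simpa [Real.norm_eq_abs] using hb x)⟩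

private lemma integral_comp_mp (hR : MeasurePreserving R μ μ) {f : X → ℝ}
    (hf : AEStronglyMeasurable f μ) : ∫ x, f (R x) ∂μ = ∫ x, f x ∂μ := by
  have h := MeasureTheory.integral_map (φ := R) hR.measurable.aemeasurable
    (f := f) (by rw [hR.map_eq]; exact hf)
  rw [hR.map_eq] at h
  exact h.symm

private lemma measurable_birkhoffSum (hR : Measurable R) {g : X → ℝ} (hg : Measurable g)
    (n : ℕ) : Measurable (birkhoffSum R g n) := by
  unfold birkhoffSum
  exact Finset.measurable_sum _ fun i _ => hg.comp (hR.iterate i)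

private lemma measurable_birkhoffAverage (hR : Measurable R) {g : X → ℝ} (hg : Measurable g)
    (n : ℕ) : Measurable (fun x => birkhoffAverage ℝ R g n x) := by
  unfold birkhoffAverage
  exact (measurable_birkhoffSum hR hg n).const_smul ((n:ℝ)⁻¹)

private lemma abs_birkhoffSum_le {g : X → ℝ} {C : ℝ} (hg : ∀ x, |g x| ≤ C) (n : ℕ) (x : X) :
    |birkhoffSum R g n x| ≤ n * C := by
  unfold birkhoffSum
  refine (Finset.abs_sum_le_sum_abs _ _).trans ?_
  calc ∑ i ∈ Finset.range n, |g (R^[i] x)| ≤ ∑ _i ∈ Finset.range n, C :=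
        Finset.sum_le_sum fun i _ => hg _
    _ = n * C := by simp [Finset.sum_const, mul_comm]

private lemma abs_birkhoffAverage_le {g : X → ℝ} {C : ℝ} (hC : 0 ≤ C) (hg : ∀ x, |g x| ≤ C)
    (n : ℕ) (x : X) : |birkhoffAverage ℝ R g n x| ≤ C := by
  rcases Nat.eq_zero_or_pos n with rfl|hn
  · simpa [birkhoffAverage, birkhoffSum] using hC
  · rw [birkhoffAverage, smul_eq_mul, abs_mul, abs_inv, Nat.abs_cast]
    have h1 := abs_birkhoffSum_le (R := R) hg n x
    have hn' : (0:ℝ) < n := by exact_mod_cast hn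
    calc ((n:ℝ))⁻¹ * |birkhoffSum R g n x| ≤ (n:ℝ)⁻¹ * (n * C) := by
          apply mul_le_mul_of_nonneg_left h1 (by positivity)
      _ = C := by field_simp

/-- Running maximum of the partial Birkhoff sums `birkhoffSum R g n` for `0 ≤ n ≤ N`. -/
private noncomputable def maxS (R : X → X) (g : X → ℝ) : ℕ → X → ℝ
  | 0 => fun _ => 0
  | (N+1) => fun x => max (maxS R g N x) (birkhoffSum R g (N+1) x)

private lemma maxS_nonneg (g : X → ℝ) (N : ℕ) (x : X) : 0 ≤ maxS R g N x := by
  induction N with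
  | zero => exact le_refl _
  | succ N ih => exact le_max_of_le_left ih

private lemma maxS_mono (g : X → ℝ) {N M : ℕ} (h : N ≤ M) (x : X) :
    maxS R g N x ≤ maxS R g M x := by
  induction M with
  | zero => simp_all [Nat.le_zero.1 h]
  | succ M ih =>
    rcases Nat.lt_succ_iff_lt_or_eq.1 (Nat.lt_succ_of_le h) with h'|rfl
    · exact (ih (Nat.lt_succ_iff.1 h')).trans (le_max_left _ _)
    · exact le_refl _

private lemma birkhoffSum_le_maxS (g : X → ℝ) {n N : ℕ} (h : n ≤ N) (x : X) :
    birkhoffSum R g n x ≤ maxS R g N x := by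
  induction N with
  | zero =>
    rw [Nat.le_zero.1 h]
    simp [maxS, birkhoffSum]
  | succ N ih =>
    rcases Nat.lt_succ_iff_lt_or_eq.1 (Nat.lt_succ_of_le h) with h'|rfl
    · exact (ih (Nat.lt_succ_iff.1 h')).trans (le_max_left _ _)
    · exact le_max_right _ _

private lemma maxS_exists (g : X → ℝ) (N : ℕ) (x : X) :
    ∃ n ≤ N, maxS R g N x = birkhoffSum R g n x := by
  induction N with
  | zero => exact ⟨0, le_refl _, by simp [maxS, birkhoffSum]⟩
  | succ N ih =>
    obtain ⟨n, hn, he⟩ := ih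
    rcases max_cases (maxS R g N x) (birkhoffSum R g (N+1) x) with ⟨h1, _⟩|⟨h1, _⟩
    · exact ⟨n, hn.trans (Nat.le_succ N), h1.trans he⟩
    · exact ⟨N+1, le_refl _, h1⟩

private lemma maxS_measurable (hR : Measurable R) {g : X → ℝ} (hg : Measurable g) (N : ℕ) :
    Measurable (maxS R g N) := by
  induction N with
  | zero => exact measurable_const
  | succ N ih => exact ih.max (measurable_birkhoffSum hR hg (N+1))

private lemma abs_maxS_le {g : X → ℝ} {C : ℝ} (hC : 0 ≤ C) (hg : ∀ x, |g x| ≤ C) (N : ℕ)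
    (x : X) : |maxS R g N x| ≤ N * C := by
  rw [abs_of_nonneg (maxS_nonneg g N x)]
  obtain ⟨n, hn, he⟩ := maxS_exists (R := R) g N x
  rw [he]
  refine (le_abs_self _).trans ((abs_birkhoffSum_le hg n x).trans ?_)
  have : (n:ℝ) ≤ N := by exact_mod_cast hn
  nlinarith

private lemma maxS_key {g : X → ℝ} {N : ℕ} {x : X} (h : 0 < maxS R g N x) :
    maxS R g N x ≤ g x + maxS R g N (R x) := by
  obtain ⟨n, hn, he⟩ := maxS_exists (R := R) g N x
  match n, hn, he with
  | 0, _, he => rw [he] at h; simp [birkhoffSum] at h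
  | (m+1), hn, he =>
    rw [he, birkhoffSum_succ']
    have : birkhoffSum R g m (R x) ≤ maxS R g N (R x) :=
      birkhoffSum_le_maxS g (Nat.le_of_succ_le hn) (R x)
    linarith

/-- The maximal ergodic theorem. -/
private lemma maxErgodic (hR : MeasurePreserving R μ μ) {g : X → ℝ} {C : ℝ}
    (hg : Measurable g) (hgb : ∀ x, |g x| ≤ C) :
    0 ≤ ∫ x in {x | ∃ n, 0 < birkhoffSum R g n x}, g x ∂μ := by
  have hXne : Nonempty X := nonempty_of_prob μ
  have hC : 0 ≤ C := le_trans (abs_nonneg _) (hgb (Classical.arbitrary X))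
  have hig : Integrable g μ := integrable_of_bdd hg hgb
  set E : ℕ → Set X := fun N => {x | 0 < maxS R g N x} with hE
  have hEmeas : ∀ N, MeasurableSet (E N) := fun N =>
    measurableSet_lt measurable_const (maxS_measurable hR.measurable hg N)
  have hEmono : Monotone E := by
    intro N M h x hx
    exact lt_of_lt_of_le hx (maxS_mono g h x)
  have hEunion : ⋃ N, E N = {x | ∃ n, 0 < birkhoffSum R g n x} := by
    ext x
    simp only [Set.mem_iUnion, hE, Set.mem_setOf_eq]
    constructor
    · rintro ⟨N, hN⟩
      obtain ⟨n, _, he⟩ := maxS_exists (R := R) g N x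
      exact ⟨n, he ▸ hN⟩
    · rintro ⟨n, hn⟩
      exact ⟨n, lt_of_lt_of_le hn (birkhoffSum_le_maxS g (le_refl n) x)⟩
  have key : ∀ N, 0 ≤ ∫ x in E N, g x ∂μ := by
    intro N
    have hMmeas := maxS_measurable hR.measurable hg N
    have hiM : Integrable (maxS R g N) μ := integrable_of_bdd hMmeas (abs_maxS_le hC hgb N)
    have hiMR : Integrable (fun x => maxS R g N (R x)) μ :=
      integrable_of_bdd (hMmeas.comp hR.measurable) (fun x => abs_maxS_le hC hgb N (R x))
    have hptwise : ∀ x ∈ E N, maxS R g N x - maxS R g N (R x) ≤ g x := by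
      intro x hx
      have := maxS_key (hx : 0 < maxS R g N x)
      linarith
    have h1 : ∫ x in E N, (maxS R g N x - maxS R g N (R x)) ∂μ ≤ ∫ x in E N, g x ∂μ :=
      setIntegral_mono_on (hiM.sub hiMR).integrableOn hig.integrableOn (hEmeas N) hptwise
    have h2 : ∫ x in E N, maxS R g N x ∂μ = ∫ x, maxS R g N x ∂μ := by
      rw [← integral_add_compl (hEmeas N) hiM]
      have : ∫ x in (E N)ᶜ, maxS R g N x ∂μ = 0 := by
        rw [setIntegral_congr_fun (hEmeas N).compl (g := fun _ => (0:ℝ))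
          (fun x hx => le_antisymm (not_lt.1 hx) (maxS_nonneg g N x))]
        simp
      rw [this, add_zero]
    have h3 : ∫ x in E N, maxS R g N (R x) ∂μ ≤ ∫ x, maxS R g N (R x) ∂μ :=
      setIntegral_le_integral hiMR (ae_of_all _ fun x => maxS_nonneg g N (R x))
    have h4 : ∫ x, maxS R g N (R x) ∂μ = ∫ x, maxS R g N x ∂μ :=
      integral_comp_mp hR hMmeas.aestronglyMeasurable
    have h5 : ∫ x in E N, (maxS R g N x - maxS R g N (R x)) ∂μ
        = ∫ x in E N, maxS R g N x ∂μ - ∫ x in E N, maxS R g N (R x) ∂μ :=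
      integral_sub hiM.integrableOn hiMR.integrableOn
    linarith
  rw [← hEunion]
  have htend := tendsto_setIntegral_of_monotone (μ := μ) (f := g) hEmeas hEmono
    (hEunion ▸ hig.integrableOn)
  exact ge_of_tendsto' htend key

end Birkhoff

set_option linter.unusedSectionVars false
section Birkhoff2

variable {X : Type*} [MeasurableSpace X] {μ : Measure X} [IsProbabilityMeasure μ]
variable {R : X → X}

/-- Weak maximal inequality. -/
private lemma weakMax (hR : MeasurePreserving R μ μ) {u : X → ℝ} {C lam : ℝ}
    (hu : Measurable u) (h0 : ∀ x, 0 ≤ u x) (hub : ∀ x, u x ≤ C) (hlam : 0 < lam) :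
    lam * (μ {x | ∃ n, lam * n < birkhoffSum R u n x}).toReal ≤ ∫ x, u x ∂μ := by
  set g : X → ℝ := fun x => u x - lam with hgdef
  have hgm : Measurable g := hu.sub measurable_const
  have hgb : ∀ x, |g x| ≤ C + lam := by
    intro x
    rw [abs_le]
    constructor <;> simp only [hgdef] <;> nlinarith [h0 x, hub x]
  have hsum : ∀ n x, birkhoffSum R g n x = birkhoffSum R u n x - n * lam := by
    intro n x
    simp [hgdef, birkhoffSum, Finset.sum_sub_distrib]
  have hset : {x | ∃ n, lam * n < birkhoffSum R u n x}
      = {x | ∃ n, 0 < birkhoffSum R g n x} := by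
    ext x
    simp only [Set.mem_setOf_eq]
    constructor <;> rintro ⟨n, hn⟩ <;> refine ⟨n, ?_⟩ <;> rw [hsum] at * <;>
      nlinarith [mul_comm lam (n:ℝ)]
  have hME := maxErgodic hR hgm hgb
  set A := {x | ∃ n, 0 < birkhoffSum R g n x} with hA
  have hAmeas : MeasurableSet A := by
    have : A = ⋃ n, {x | 0 < birkhoffSum R g n x} := by
      ext x; simp [hA]
    rw [this]
    exact MeasurableSet.iUnion fun n =>
      measurableSet_lt measurable_const (measurable_birkhoffSum hR.measurable hgm n)
  have hiu : Integrable u μ := integrable_of_bdd hu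
    (fun x => by rw [abs_of_nonneg (h0 x)]; exact hub x)
  have h1 : ∫ x in A, g x ∂μ = ∫ x in A, u x ∂μ - lam * (μ A).toReal := by
    have := integral_sub (μ := μ.restrict A) hiu.integrableOn
      (integrable_const (c := lam)).integrableOn
    simp only [hgdef] at this ⊢
    rw [this, setIntegral_const, smul_eq_mul, mul_comm, measureReal_def]
  have h2 : ∫ x in A, u x ∂μ ≤ ∫ x, u x ∂μ :=
    setIntegral_le_integral hiu (ae_of_all _ h0)
  rw [hset]
  linarith [hME.trans_eq h1]

/-- Birkhoff's pointwise ergodic theorem for bounded measurable functions. -/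
private lemma birkhoff_ae (hR : MeasurePreserving R μ μ) {g : X → ℝ} {C : ℝ}
    (hg : Measurable g) (hgb : ∀ x, |g x| ≤ C) :
    ∀ᵐ x ∂μ, Tendsto (fun n => birkhoffAverage ℝ R g n x) atTop
      (nhds (limsup (fun n => birkhoffAverage ℝ R g n x) atTop)) := by
  have hXne : Nonempty X := nonempty_of_prob μ
  have hC : 0 ≤ C := le_trans (abs_nonneg _) (hgb (Classical.arbitrary X))
  set A : ℕ → X → ℝ := fun n x => birkhoffAverage ℝ R g n x with hAdef
  have hAb : ∀ x n, |A n x| ≤ C := fun x n => abs_birkhoffAverage_le hC hgb n x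
  have hAm : ∀ n, Measurable (A n) := fun n => measurable_birkhoffAverage hR.measurable hg n
  -- the sets where the averages oscillate between q and r
  have key : ∀ q r : ℚ, q < r →
      μ {x | liminf (fun n => A n x) atTop < q ∧ (r:ℝ) < limsup (fun n => A n x) atTop} = 0 := by
    intro q r hqr
    set E := {x | liminf (fun n => A n x) atTop < q ∧ (r:ℝ) < limsup (fun n => A n x) atTop}
      with hEdef
    have hEmeas : MeasurableSet E := by
      apply MeasurableSet.inter
      · exact measurableSet_lt (Measurable.liminf hAm) measurable_const
      · exact measurableSet_lt measurable_const (Measurable.limsup hAm)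
    have hdiff : ∀ x, Tendsto (fun n => A n (R x) - A n x) atTop (nhds 0) := by
      intro x
      have heq : ∀ n, A n (R x) - A n x = (n:ℝ)⁻¹ • (g (R^[n] x) - g x) := fun n =>
        birkhoffAverage_apply_sub_birkhoffAverage (R := ℝ) R g n x
      have hb : ∀ n : ℕ, |A n (R x) - A n x| ≤ 2 * C * (n:ℝ)⁻¹ := by
        intro n
        rw [heq n, smul_eq_mul, abs_mul, abs_inv, Nat.abs_cast, mul_comm]
        have h1 : |g (R^[n] x) - g x| ≤ 2 * C := by
          have := hgb (R^[n] x); have := hgb x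
          rw [abs_le] at *
          constructor <;> [linarith; linarith]
        apply mul_le_mul_of_nonneg_right h1 (by positivity)
      have htend : Tendsto (fun n : ℕ => 2 * C * (n:ℝ)⁻¹) atTop (nhds 0) := by
        simpa using (tendsto_inv_atTop_nhds_zero_nat).const_mul (2*C)
      apply squeeze_zero_norm (fun n => by simpa [Real.norm_eq_abs] using hb n) htend
    have hlimsup_inv : ∀ x, limsup (fun n => A n (R x)) atTop
        = limsup (fun n => A n x) atTop :=
      fun x => limsup_eq_of_tendsto_sub (fun n => hAb x n) (fun n => hAb (R x) n) (hdiff x)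
    have hliminf_inv : ∀ x, liminf (fun n => A n (R x)) atTop
        = liminf (fun n => A n x) atTop :=
      fun x => liminf_eq_of_tendsto_sub (fun n => hAb x n) (fun n => hAb (R x) n) (hdiff x)
    have hEinv : R ⁻¹' E = E := by
      ext x
      simp only [hEdef, Set.mem_preimage, Set.mem_setOf_eq, hlimsup_inv x, hliminf_inv x]
    have hEiter : ∀ x, x ∈ E → ∀ i, R^[i] x ∈ E := by
      intro x hx i
      induction i with
      | zero => exact hx
      | succ i ih =>
        rw [Function.iterate_succ_apply']
        rw [← hEinv] at ih
        exact ih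
    have hEiter' : ∀ x, x ∉ E → ∀ i, R^[i] x ∉ E := by
      intro x hx i
      induction i with
      | zero => exact hx
      | succ i ih =>
        rw [Function.iterate_succ_apply']
        intro hc
        have h' : R^[i] x ∈ R ⁻¹' E := hc
        rw [hEinv] at h'
        exact ih h'
    -- apply the maximal ergodic theorem to (g - r) * 1_E
    have main : ∀ (c : ℝ) (gg : X → ℝ), Measurable gg → (∀ y, |gg y| ≤ C) →
        (∀ x, x ∈ E → ∃ᶠ n in atTop, c < birkhoffAverage ℝ R gg n x) →
        0 ≤ ∫ x in E, gg x ∂μ - c * (μ E).toReal := by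
      intro c gg hggm hggb hfreq
      set g1 : X → ℝ := fun x => (gg x - c) * E.indicator (fun _ => (1:ℝ)) x with hg1def
      have hg1m : Measurable g1 :=
        (hggm.sub measurable_const).mul (measurable_const.indicator hEmeas)
      have hg1b : ∀ x, |g1 x| ≤ (C + |c|) := by
        intro x
        rw [hg1def]
        simp only
        rw [abs_mul]
        have h2 : |E.indicator (fun _ => (1:ℝ)) x| ≤ 1 := by
          rcases Set.indicator_eq_zero_or_self E (fun _ => (1:ℝ)) x with h|h <;> rw [h] <;> simp
        have h1 : |gg x - c| ≤ C + |c| := (abs_sub _ _).trans (by gcongr; exact hggb x)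
        nlinarith [abs_nonneg (gg x - c), abs_nonneg (E.indicator (fun _ => (1:ℝ)) x)]
      have hsum1 : ∀ n x, x ∈ E → birkhoffSum R g1 n x = birkhoffSum R gg n x - n * c := by
        intro n x hx
        simp only [birkhoffSum, hg1def]
        have hterm : ∀ i ∈ Finset.range n,
            (gg (R^[i] x) - c) * E.indicator (fun _ => (1:ℝ)) (R^[i] x)
              = gg (R^[i] x) - c := by
          intro i _
          rw [Set.indicator_of_mem (hEiter x hx i), mul_one]
        rw [Finset.sum_congr rfl hterm, Finset.sum_sub_distrib, Finset.sum_const,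
          Finset.card_range, nsmul_eq_mul]
      have hE1 : {x | ∃ n, 0 < birkhoffSum R g1 n x} = E := by
        ext x
        simp only [Set.mem_setOf_eq]
        constructor
        · rintro ⟨n, hn⟩
          by_contra hx
          have : birkhoffSum R g1 n x = 0 := by
            simp only [birkhoffSum, hg1def]
            apply Finset.sum_eq_zero
            intro i _
            rw [Set.indicator_of_notMem (hEiter' x hx i), mul_zero]
          rw [this] at hn
          exact lt_irrefl _ hn
        · intro hx
          obtain ⟨n, hcn, hn1⟩ := ((hfreq x hx).and_eventually (eventually_ge_atTop 1)).exists
          refine ⟨n, ?_⟩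
          rw [hsum1 n x hx]
          have hn0 : (0:ℝ) < n := by exact_mod_cast hn1
          have : c * n < birkhoffSum R gg n x := by
            have := hcn
            rw [birkhoffAverage, smul_eq_mul] at this
            calc c * n < ((n:ℝ)⁻¹ * birkhoffSum R gg n x) * n := by
                  apply mul_lt_mul_of_pos_right this hn0
              _ = birkhoffSum R gg n x := by field_simp
          nlinarith
      have hME := maxErgodic hR hg1m hg1b
      rw [hE1] at hME
      have : ∫ x in E, g1 x ∂μ = ∫ x in E, gg x ∂μ - c * (μ E).toReal := by
        have hcong : ∫ x in E, g1 x ∂μ = ∫ x in E, (gg x - c) ∂μ := by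
          apply setIntegral_congr_fun hEmeas
          intro x hx
          simp only [hg1def]
          rw [Set.indicator_of_mem hx, mul_one]
        rw [hcong, integral_sub (integrable_of_bdd hggm hggb).integrableOn
          (integrable_const c).integrableOn, setIntegral_const, smul_eq_mul, mul_comm, measureReal_def]
      linarith [hME.trans_eq this]
    have hcob : ∀ x, IsCoboundedUnder (· ≤ ·) atTop (fun n => A n x) :=
      fun x => (bdd_below_of_abs (hAb x)).isCoboundedUnder_le
    have hcob' : ∀ x, IsCoboundedUnder (· ≥ ·) atTop (fun n => A n x) :=
      fun x => (bdd_above_of_abs (hAb x)).isCoboundedUnder_ge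
    have h1 := main r g hg hgb (fun x hx => frequently_lt_of_lt_limsup (hcob x) hx.2)
    have h2 := main (-(q:ℝ)) (fun x => -g x) (hg.neg) (fun y => by
        rw [abs_neg]; exact hgb y) ?_
    · -- combine the two inequalities
      have hint : ∫ x in E, (fun x => -g x) x ∂μ = - ∫ x in E, g x ∂μ := by
        simp [integral_neg]
      rw [hint] at h2
      have hqr' : (q:ℝ) < r := by exact_mod_cast hqr
      have hμ : (μ E).toReal = 0 := by nlinarith [ENNReal.toReal_nonneg (a := μ E)]
      rcases (ENNReal.toReal_eq_zero_iff _).mp hμ with h|h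
      · exact h
      · exact absurd h (measure_ne_top μ E)
    · intro x hx
      have : ∀ n, birkhoffAverage ℝ R (fun x => -g x) n x = - A n x := by
        intro n
        simp only [hAdef]
        rw [birkhoffAverage, birkhoffAverage]
        simp [birkhoffSum, smul_eq_mul, mul_neg, Finset.sum_neg_distrib]
      simp only [this]
      have := frequently_lt_of_liminf_lt (hcob' x) hx.1
      apply this.mono
      intro n hn
      linarith
  -- combine over all rational pairs
  have hae : ∀ᵐ x ∂μ, ∀ q r : ℚ, q < r →
      ¬(liminf (fun n => A n x) atTop < q ∧ (r:ℝ) < limsup (fun n => A n x) atTop) := by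
    rw [ae_all_iff]
    intro q
    rw [ae_all_iff]
    intro r
    by_cases hqr : q < r
    · have h2 := (measure_eq_zero_iff_ae_notMem (μ := μ)).mp (key q r hqr)
      filter_upwards [h2] with x hx
      intro _
      exact hx
    · exact ae_of_all _ fun x h _ => absurd h hqr
  filter_upwards [hae] with x hx
  have hbd : IsBoundedUnder (· ≤ ·) atTop (fun n => A n x) := bdd_above_of_abs (hAb x)
  have hbd' : IsBoundedUnder (· ≥ ·) atTop (fun n => A n x) := bdd_below_of_abs (hAb x)
  have heq : liminf (fun n => A n x) atTop = limsup (fun n => A n x) atTop := by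
    by_contra hne
    have hlt : liminf (fun n => A n x) atTop < limsup (fun n => A n x) atTop :=
      lt_of_le_of_ne (liminf_le_limsup hbd hbd') hne
    obtain ⟨q, hq1, hq2⟩ := exists_rat_btwn hlt
    obtain ⟨r, hr1, hr2⟩ := exists_rat_btwn hq2
    exact hx q r (by exact_mod_cast hr1) ⟨hq1, hr2⟩
  exact tendsto_of_liminf_eq_limsup heq rfl hbd hbd'

end Birkhoff2

section Maximal
set_option linter.unusedSectionVars false

variable {X : Type*} [MeasurableSpace X] {μ : Measure X} [IsProbabilityMeasure μ]
variable {R : X → X}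

private lemma birkhoffAverage_nonneg {u : X → ℝ} (h0 : ∀ x, 0 ≤ u x) (n : ℕ) (x : X) :
    0 ≤ birkhoffAverage ℝ R u n x := by
  rw [birkhoffAverage, smul_eq_mul]
  apply mul_nonneg (by positivity)
  exact Finset.sum_nonneg fun i _ => h0 _

private lemma birkhoffAverage_mono {u v : X → ℝ} (h : ∀ x, u x ≤ v x) (n : ℕ) (x : X) :
    birkhoffAverage ℝ R u n x ≤ birkhoffAverage ℝ R v n x := by
  rw [birkhoffAverage, birkhoffAverage, smul_eq_mul, smul_eq_mul]
  apply mul_le_mul_of_nonneg_left _ (by positivity)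
  exact Finset.sum_le_sum fun i _ => h _

/-- The one-sided ergodic maximal function. -/
private noncomputable def maxAvg (R : X → X) (u : X → ℝ) : X → ℝ :=
  fun x => ⨆ n : ℕ, birkhoffAverage ℝ R u (n+1) x

private lemma maxAvg_bddAbove {u : X → ℝ} {C : ℝ} (hC : 0 ≤ C) (hub : ∀ x, |u x| ≤ C)
    (x : X) : BddAbove (Set.range fun n : ℕ => birkhoffAverage ℝ R u (n+1) x) := by
  refine ⟨C, ?_⟩
  rintro y ⟨n, rfl⟩
  exact (abs_le.1 (abs_birkhoffAverage_le hC hub (n+1) x)).2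

private lemma maxAvg_measurable (hR : Measurable R) {u : X → ℝ} (hu : Measurable u) :
    Measurable (maxAvg R u) :=
  Measurable.iSup fun n => measurable_birkhoffAverage hR hu (n+1)

private lemma avg_le_maxAvg {u : X → ℝ} {C : ℝ} (hC : 0 ≤ C) (hub : ∀ x, |u x| ≤ C)
    {N : ℕ} (hN : 1 ≤ N) (x : X) : birkhoffAverage ℝ R u N x ≤ maxAvg R u x := by
  have := le_ciSup (maxAvg_bddAbove (R := R) hC hub x) (N - 1)
  rwa [Nat.sub_add_cancel hN] at this

private lemma maxAvg_nonneg {u : X → ℝ} {C : ℝ} (hC : 0 ≤ C) (h0 : ∀ x, 0 ≤ u x)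
    (hub : ∀ x, |u x| ≤ C) (x : X) : 0 ≤ maxAvg R u x :=
  le_trans (birkhoffAverage_nonneg h0 1 x) (avg_le_maxAvg hC hub (le_refl 1) x)

private lemma maxAvg_le {u : X → ℝ} {C : ℝ} (hC : 0 ≤ C) (hub : ∀ x, |u x| ≤ C) (x : X) :
    maxAvg R u x ≤ C :=
  ciSup_le fun n => (abs_le.1 (abs_birkhoffAverage_le hC hub (n+1) x)).2

private lemma maxAvg_abs_le {u : X → ℝ} {C : ℝ} (hC : 0 ≤ C) (h0 : ∀ x, 0 ≤ u x)
    (hub : ∀ x, |u x| ≤ C) (x : X) : |maxAvg R u x| ≤ C := by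
  rw [abs_of_nonneg (maxAvg_nonneg hC h0 hub x)]
  exact maxAvg_le hC hub x

/-- Weak maximal inequality for the maximal function. -/
private lemma maxAvg_weak (hR : MeasurePreserving R μ μ) {u : X → ℝ} {C lam : ℝ}
    (hu : Measurable u) (hC : 0 ≤ C) (h0 : ∀ x, 0 ≤ u x) (hub : ∀ x, |u x| ≤ C)
    (hlam : 0 < lam) :
    lam * (μ {x | lam < maxAvg R u x}).toReal ≤ ∫ x, u x ∂μ := by
  have hsub : {x | lam < maxAvg R u x} ⊆ {x | ∃ n, lam * n < birkhoffSum R u n x} := by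
    intro x hx
    have : ∃ n : ℕ, lam < birkhoffAverage ℝ R u (n+1) x := by
      by_contra hc
      push_neg at hc
      exact absurd (ciSup_le hc) (not_le.2 hx)
    obtain ⟨n, hn⟩ := this
    refine ⟨n+1, ?_⟩
    rw [birkhoffAverage, smul_eq_mul] at hn
    have hp : (0:ℝ) < (n+1 : ℕ) := by positivity
    calc lam * ((n+1 : ℕ):ℝ) < (((n+1:ℕ):ℝ))⁻¹ * birkhoffSum R u (n+1) x * ((n+1:ℕ):ℝ) :=
          mul_lt_mul_of_pos_right hn hp
      _ = birkhoffSum R u (n+1) x := by field_simp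
  have hci : (μ {x | lam < maxAvg R u x}).toReal
      ≤ (μ {x | ∃ n, lam * n < birkhoffSum R u n x}).toReal :=
    ENNReal.toReal_mono (measure_ne_top μ _) (measure_mono hsub)
  calc lam * (μ {x | lam < maxAvg R u x}).toReal
      ≤ lam * (μ {x | ∃ n, lam * n < birkhoffSum R u n x}).toReal := by
        apply mul_le_mul_of_nonneg_left hci hlam.le
    _ ≤ ∫ x, u x ∂μ := weakMax hR hu h0 (fun x => (abs_le.1 (hub x)).2) hlam

/-- Integral bound for the maximal function in terms of λ and `∫ u`. -/
private lemma maxAvg_integral_le (hR : MeasurePreserving R μ μ) {u : X → ℝ} {C lam : ℝ}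
    (hu : Measurable u) (hC : 0 ≤ C) (h0 : ∀ x, 0 ≤ u x) (hub : ∀ x, |u x| ≤ C)
    (hlam : 0 < lam) :
    ∫ x, maxAvg R u x ∂μ ≤ lam + C * (∫ x, u x ∂μ) / lam := by
  set s := {x | lam < maxAvg R u x} with hs
  have hsmeas : MeasurableSet s := measurableSet_lt measurable_const
    (maxAvg_measurable hR.measurable hu)
  have hpt : ∀ x, maxAvg R u x ≤ lam + C * s.indicator (fun _ => (1:ℝ)) x := by
    intro x
    by_cases hx : x ∈ s
    · rw [Set.indicator_of_mem hx, mul_one]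
      have := maxAvg_le (R := R) hC hub x
      linarith [hlam.le]
    · rw [Set.indicator_of_notMem hx, mul_zero, add_zero]
      exact not_lt.1 hx
  have hiM : Integrable (maxAvg R u) μ :=
    integrable_of_bdd (maxAvg_measurable hR.measurable hu) (maxAvg_abs_le hC h0 hub)
  have hiI : Integrable (fun x => lam + C * s.indicator (fun _ => (1:ℝ)) x) μ := by
    apply Integrable.add (integrable_const lam)
    apply Integrable.const_mul
    exact (integrable_const (1:ℝ)).indicator hsmeas
  have h1 : ∫ x, maxAvg R u x ∂μ ≤ ∫ x, (lam + C * s.indicator (fun _ => (1:ℝ)) x) ∂μ :=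
    integral_mono hiM hiI hpt
  have h2 : ∫ x, (lam + C * s.indicator (fun _ => (1:ℝ)) x) ∂μ
      = lam + C * (μ s).toReal := by
    rw [integral_add (integrable_const lam) (((integrable_const (1:ℝ)).indicator hsmeas).const_mul C),
      integral_const, integral_const_mul, integral_indicator hsmeas]
    simp [measure_univ, measureReal_def]
  have h3 : (μ s).toReal ≤ (∫ x, u x ∂μ) / lam := by
    rw [le_div_iff₀ hlam, mul_comm]
    exact maxAvg_weak hR hu hC h0 hub hlam
  calc ∫ x, maxAvg R u x ∂μ ≤ lam + C * (μ s).toReal := h1.trans_eq h2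
    _ ≤ lam + C * ((∫ x, u x ∂μ) / lam) := by nlinarith
    _ = lam + C * (∫ x, u x ∂μ) / lam := by ring

/-- The (everywhere-defined) limit of Birkhoff averages, as a limsup. -/
private noncomputable def birkLim (R : X → X) (ψ : X → ℝ) : X → ℝ :=
  fun x => limsup (fun n => birkhoffAverage ℝ R ψ n x) atTop

private lemma birkLim_measurable (hR : Measurable R) {ψ : X → ℝ} (hψ : Measurable ψ) :
    Measurable (birkLim R ψ) :=
  Measurable.limsup fun n => measurable_birkhoffAverage hR hψ n

private lemma birkLim_ae_tendsto (hR : MeasurePreserving R μ μ) {ψ : X → ℝ} {C : ℝ}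
    (hψ : Measurable ψ) (hψb : ∀ x, |ψ x| ≤ C) :
    ∀ᵐ x ∂μ, Tendsto (fun n => birkhoffAverage ℝ R ψ n x) atTop (nhds (birkLim R ψ x)) :=
  birkhoff_ae hR hψ hψb

private lemma birkLim_nonneg {ψ : X → ℝ} {C : ℝ} (hC : 0 ≤ C) (h0 : ∀ x, 0 ≤ ψ x)
    (hψb : ∀ x, |ψ x| ≤ C) (x : X) : 0 ≤ birkLim R ψ x := by
  apply le_limsup_of_frequently_le
  · exact Frequently.of_forall fun n => birkhoffAverage_nonneg h0 n x
  · exact bdd_above_of_abs fun n => abs_birkhoffAverage_le hC hψb n x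

private lemma integral_birkhoffAverage (hR : MeasurePreserving R μ μ) {ψ : X → ℝ} {C : ℝ}
    (hψ : Measurable ψ) (hψb : ∀ x, |ψ x| ≤ C) {n : ℕ} (hn : 1 ≤ n) :
    ∫ x, birkhoffAverage ℝ R ψ n x ∂μ = ∫ x, ψ x ∂μ := by
  have hint : ∀ i : ℕ, Integrable (fun x => ψ (R^[i] x)) μ :=
    fun i => integrable_of_bdd (hψ.comp (hR.measurable.iterate i)) (fun x => hψb _)
  have h1 : ∫ x, birkhoffSum R ψ n x ∂μ = n * ∫ x, ψ x ∂μ := by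
    unfold birkhoffSum
    rw [integral_finset_sum _ (fun i _ => hint i)]
    have : ∀ i ∈ Finset.range n, ∫ x, ψ (R^[i] x) ∂μ = ∫ x, ψ x ∂μ := fun i _ =>
      integral_comp_mp (hR.iterate i) hψ.aestronglyMeasurable
    rw [Finset.sum_congr rfl this, Finset.sum_const, Finset.card_range, nsmul_eq_mul]
  unfold birkhoffAverage
  rw [integral_smul, h1, smul_eq_mul]
  have hn' : (0:ℝ) < n := by exact_mod_cast hn
  field_simp

private lemma birkLim_integral (hR : MeasurePreserving R μ μ) {ψ : X → ℝ} {C : ℝ}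
    (hC : 0 ≤ C) (hψ : Measurable ψ) (hψb : ∀ x, |ψ x| ≤ C) :
    ∫ x, birkLim R ψ x ∂μ = ∫ x, ψ x ∂μ := by
  have hconv := birkLim_ae_tendsto hR hψ hψb
  have htend : Tendsto (fun n => ∫ x, birkhoffAverage ℝ R ψ n x ∂μ) atTop
      (nhds (∫ x, birkLim R ψ x ∂μ)) := by
    apply tendsto_integral_of_dominated_convergence (fun _ => C)
    · exact fun n => (measurable_birkhoffAverage hR.measurable hψ n).aestronglyMeasurable
    · exact integrable_const C
    · exact fun n => ae_of_all _ fun x => by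
        simpa [Real.norm_eq_abs] using abs_birkhoffAverage_le hC hψb n x
    · exact hconv
  have hev : (fun n => ∫ x, birkhoffAverage ℝ R ψ n x ∂μ) =ᶠ[atTop]
      (fun _ => ∫ x, ψ x ∂μ) := by
    filter_upwards [eventually_ge_atTop 1] with n hn
    exact integral_birkhoffAverage hR hψ hψb hn
  have htend2 : Tendsto (fun n => ∫ x, birkhoffAverage ℝ R ψ n x ∂μ) atTop
      (nhds (∫ x, ψ x ∂μ)) := by
    rw [tendsto_congr' hev]
    exact tendsto_const_nhds
  exact tendsto_nhds_unique htend htend2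

end Maximal

section Products
set_option linter.unusedSectionVars false

variable {X : Type*} [MeasurableSpace X] {μ : Measure X} [IsProbabilityMeasure μ]
variable {S T : X → X}

/-- The triple average appearing in the theorem. -/
private noncomputable def tAvg (S T : X → X) (f1 f2 φ : X → ℝ) (N : ℕ) (x : X) : ℝ :=
  ((N : ℝ) ^ 2)⁻¹ * ∑ i ∈ Finset.range N, ∑ j ∈ Finset.range N,
    f1 (S^[i] x) * f2 (T^[j] x) * φ (S^[i] (T^[j] x))

/-- Bounded measurable products of an `S`-invariant and a `T`-invariant function. -/
private def prodSet (S T : X → X) : Set (X → ℝ) :=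
  {ψ | ∃ g h : X → ℝ, Measurable g ∧ Measurable h ∧ (∀ x, g (S x) = g x) ∧
    (∀ x, h (T x) = h x) ∧ (∀ x, |g x| ≤ 1) ∧ (∀ x, |h x| ≤ 1) ∧ ψ = fun x => g x * h x}

private lemma prodSet_one : (1 : X → ℝ) ∈ prodSet S T := by
  refine ⟨fun _ => 1, fun _ => 1, measurable_const, measurable_const, fun _ => rfl,
    fun _ => rfl, fun _ => by norm_num, fun _ => by norm_num, ?_⟩
  funext x
  simp

private lemma prodSet_mul {ψ₁ ψ₂ : X → ℝ} (h1 : ψ₁ ∈ prodSet S T) (h2 : ψ₂ ∈ prodSet S T) :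
    ψ₁ * ψ₂ ∈ prodSet S T := by
  obtain ⟨g1, k1, hg1, hk1, hgi1, hki1, hgb1, hkb1, rfl⟩ := h1
  obtain ⟨g2, k2, hg2, hk2, hgi2, hki2, hgb2, hkb2, rfl⟩ := h2
  refine ⟨fun x => g1 x * g2 x, fun x => k1 x * k2 x, hg1.mul hg2, hk1.mul hk2,
    fun x => by show g1 (S x) * g2 (S x) = g1 x * g2 x; rw [hgi1, hgi2],
    fun x => by show k1 (T x) * k2 (T x) = k1 x * k2 x; rw [hki1, hki2], ?_, ?_, ?_⟩
  · intro x
    rw [abs_mul]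
    exact mul_le_one₀ (hgb1 x) (abs_nonneg _) (hgb2 x)
  · intro x
    rw [abs_mul]
    exact mul_le_one₀ (hkb1 x) (abs_nonneg _) (hkb2 x)
  · funext x
    simp only [Pi.mul_apply]
    ring

private lemma mem_span_of_mem_adjoin {φ : X → ℝ}
    (h : φ ∈ Algebra.adjoin ℝ (prodSet S T)) :
    φ ∈ Submodule.span ℝ (prodSet S T) := by
  have h1 : φ ∈ Subalgebra.toSubmodule (Algebra.adjoin ℝ (prodSet S T)) := h
  rw [Algebra.adjoin_eq_span] at h1
  have h2 : (↑(Submonoid.closure (prodSet S T)) : Set (X → ℝ)) ⊆ prodSet S T := by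
    intro ψ hψ
    exact Submonoid.closure_induction (fun y hy => hy) prodSet_one
      (fun a b _ _ ha hb => prodSet_mul ha hb) hψ
  exact Submodule.span_mono h2 h1

/-- Elements of the adjoin are measurable (given measurability of the generators). -/
private lemma adjoin_measurable {φ : X → ℝ} (h : φ ∈ Algebra.adjoin ℝ (prodSet S T)) :
    Measurable φ := by
  have h1 := mem_span_of_mem_adjoin h
  refine Submodule.span_induction ?_ ?_ ?_ ?_ h1
  · rintro ψ ⟨g, k, hg, hk, _, _, _, _, rfl⟩
    exact hg.mul hk
  · exact measurable_const
  · exact fun a b _ _ ha hb => ha.add hb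
  · exact fun c a _ ha => ha.const_smul c

/-- Factorization of the triple average for a single product function. -/
private lemma tAvg_factor (hcomm : ∀ x, S (T x) = T (S x)) {f1 f2 g h : X → ℝ}
    (hgi : ∀ x, g (S x) = g x) (hhi : ∀ x, h (T x) = h x) (N : ℕ) (x : X) :
    tAvg S T f1 f2 (fun y => g y * h y) N x =
      birkhoffAverage ℝ S (fun y => f1 y * h y) N x *
        birkhoffAverage ℝ T (fun y => f2 y * g y) N x := by
  have hgiter : ∀ (i : ℕ) (y : X), g (S^[i] y) = g y := by
    intro i
    induction i with
    | zero => intro y; rfl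
    | succ i ih => intro y; rw [Function.iterate_succ_apply', hgi, ih]
  have hhiter : ∀ (j : ℕ) (y : X), h (T^[j] y) = h y := by
    intro j
    induction j with
    | zero => intro y; rfl
    | succ j ih => intro y; rw [Function.iterate_succ_apply', hhi, ih]
  have hcomm' : Function.Commute S T := fun x => hcomm x
  have hcit : ∀ (i j : ℕ) (y : X), S^[i] (T^[j] y) = T^[j] (S^[i] y) := by
    intro i j y
    exact (hcomm'.iterate_iterate i j) y
  have hsumeq : ∑ i ∈ Finset.range N, ∑ j ∈ Finset.range N,
      f1 (S^[i] x) * f2 (T^[j] x) * (fun y => g y * h y) (S^[i] (T^[j] x))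
      = (∑ k ∈ Finset.range N, (fun y => f1 y * h y) (S^[k] x)) *
        (∑ k ∈ Finset.range N, (fun y => f2 y * g y) (T^[k] x)) := by
    rw [Finset.sum_mul_sum]
    apply Finset.sum_congr rfl
    intro i _
    apply Finset.sum_congr rfl
    intro j _
    show f1 (S^[i] x) * f2 (T^[j] x) * (g (S^[i] (T^[j] x)) * h (S^[i] (T^[j] x)))
        = (f1 (S^[i] x) * h (S^[i] x)) * (f2 (T^[j] x) * g (T^[j] x))
    rw [hgiter i (T^[j] x), hcit i j x, hhiter j (S^[i] x)]
    ring
  unfold tAvg birkhoffAverage birkhoffSum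
  rw [smul_eq_mul, smul_eq_mul, hsumeq, sq, mul_inv]
  ring

/-- A.e. convergence of the triple average for a single product function. -/
private lemma prodConv (hS : MeasurePreserving S μ μ) (hT : MeasurePreserving T μ μ)
    (hcomm : ∀ x, S (T x) = T (S x)) {f1 f2 : X → ℝ} {C1 C2 : ℝ}
    (hf1 : Measurable f1) (hf2 : Measurable f2) (hb1 : ∀ x, |f1 x| ≤ C1)
    (hb2 : ∀ x, |f2 x| ≤ C2) {ψ : X → ℝ} (hψ : ψ ∈ prodSet S T) :
    ∀ᵐ x ∂μ, ∃ L : ℝ, Tendsto (fun N => tAvg S T f1 f2 ψ N x) atTop (nhds L) := by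
  obtain ⟨g, h, hg, hh, hgi, hhi, hgb, hhb, rfl⟩ := hψ
  have hm1 : Measurable (fun y => f1 y * h y) := hf1.mul hh
  have hm2 : Measurable (fun y => f2 y * g y) := hf2.mul hg
  have hbb1 : ∀ y, |f1 y * h y| ≤ |C1| := by
    intro y
    rw [abs_mul]
    calc |f1 y| * |h y| ≤ C1 * 1 := by
          apply mul_le_mul (hb1 y) (hhb y) (abs_nonneg _)
            (le_trans (abs_nonneg _) (hb1 y))
      _ ≤ |C1| := by rw [mul_one]; exact le_abs_self C1
  have hbb2 : ∀ y, |f2 y * g y| ≤ |C2| := by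
    intro y
    rw [abs_mul]
    calc |f2 y| * |g y| ≤ C2 * 1 := by
          apply mul_le_mul (hb2 y) (hgb y) (abs_nonneg _)
            (le_trans (abs_nonneg _) (hb2 y))
      _ ≤ |C2| := by rw [mul_one]; exact le_abs_self C2
  filter_upwards [birkhoff_ae hS hm1 hbb1, birkhoff_ae hT hm2 hbb2] with x hx1 hx2
  exact ⟨_, Tendsto.congr (fun N => (tAvg_factor hcomm hgi hhi N x).symm) (hx1.mul hx2)⟩

/-- A.e. convergence for functions in the linear span of products. -/
private lemma spanConv (hS : MeasurePreserving S μ μ) (hT : MeasurePreserving T μ μ)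
    (hcomm : ∀ x, S (T x) = T (S x)) {f1 f2 : X → ℝ} {C1 C2 : ℝ}
    (hf1 : Measurable f1) (hf2 : Measurable f2) (hb1 : ∀ x, |f1 x| ≤ C1)
    (hb2 : ∀ x, |f2 x| ≤ C2) {φ : X → ℝ} (hφ : φ ∈ Algebra.adjoin ℝ (prodSet S T)) :
    ∀ᵐ x ∂μ, ∃ L : ℝ, Tendsto (fun N => tAvg S T f1 f2 φ N x) atTop (nhds L) := by
  have h1 := mem_span_of_mem_adjoin hφ
  refine Submodule.span_induction ?_ ?_ ?_ ?_ h1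
  · intro ψ hψ
    exact prodConv hS hT hcomm hf1 hf2 hb1 hb2 hψ
  · refine ae_of_all _ fun x => ⟨0, ?_⟩
    have hz : (fun N => tAvg S T f1 f2 (0 : X → ℝ) N x) = fun _ => 0 := by
      funext N
      unfold tAvg
      simp
    rw [hz]
    exact tendsto_const_nhds
  · intro a b _ _ ha hb
    filter_upwards [ha, hb] with x ⟨La, hLa⟩ ⟨Lb, hLb⟩
    refine ⟨La + Lb, ?_⟩
    have heq : ∀ N, tAvg S T f1 f2 (a + b) N x
        = tAvg S T f1 f2 a N x + tAvg S T f1 f2 b N x := by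
      intro N
      unfold tAvg
      rw [← mul_add, ← Finset.sum_add_distrib]
      congr 1
      apply Finset.sum_congr rfl
      intro i _
      rw [← Finset.sum_add_distrib]
      apply Finset.sum_congr rfl
      intro j _
      simp only [Pi.add_apply]
      ring
    rw [tendsto_congr heq]
    exact hLa.add hLb
  · intro c a _ ha
    filter_upwards [ha] with x ⟨La, hLa⟩
    refine ⟨c * La, ?_⟩
    have heq : ∀ N, tAvg S T f1 f2 (c • a) N x = c * tAvg S T f1 f2 a N x := by
      intro N
      have hsum : ∑ i ∈ Finset.range N, ∑ j ∈ Finset.range N,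
          f1 (S^[i] x) * f2 (T^[j] x) * (c • a) (S^[i] (T^[j] x))
          = c * ∑ i ∈ Finset.range N, ∑ j ∈ Finset.range N,
            f1 (S^[i] x) * f2 (T^[j] x) * a (S^[i] (T^[j] x)) := by
        rw [Finset.mul_sum]
        apply Finset.sum_congr rfl
        intro i _
        rw [Finset.mul_sum]
        apply Finset.sum_congr rfl
        intro j _
        simp only [Pi.smul_apply, smul_eq_mul]
        ring
      unfold tAvg
      rw [hsum]
      ring
    rw [tendsto_congr heq]
    exact hLa.const_mul c

end Products

section GoodSets
set_option linter.unusedSectionVars false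

variable {X : Type*} [MeasurableSpace X] {μ : Measure X} [IsProbabilityMeasure μ]
variable {S T : X → X}

/-- A set is good if its indicator can be approximated in `L¹` by `[0,1]`-valued elements of
the algebra generated by products of invariant functions. -/
private def Good (S T : X → X) (μ : Measure X) (C : Set X) : Prop :=
  MeasurableSet C ∧ ∀ ε > (0:ℝ), ∃ φ : X → ℝ, φ ∈ Algebra.adjoin ℝ (prodSet S T) ∧
    Measurable φ ∧ (∀ x, 0 ≤ φ x ∧ φ x ≤ 1) ∧
    ∫ x, |C.indicator (fun _ => (1:ℝ)) x - φ x| ∂μ ≤ ε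

private lemma indicator_bd (C : Set X) (x : X) :
    0 ≤ C.indicator (fun _ => (1:ℝ)) x ∧ C.indicator (fun _ => (1:ℝ)) x ≤ 1 := by
  by_cases hx : x ∈ C
  · rw [Set.indicator_of_mem hx]; norm_num
  · rw [Set.indicator_of_notMem hx]; norm_num

private lemma err_integrable {C : Set X} {φ : X → ℝ} (hC : MeasurableSet C)
    (hφ : Measurable φ) (hb : ∀ x, 0 ≤ φ x ∧ φ x ≤ 1) :
    Integrable (fun x => |C.indicator (fun _ => (1:ℝ)) x - φ x|) μ := by
  apply integrable_of_bdd (C := 1) ((measurable_const.indicator hC).sub hφ).abs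
  intro x
  rw [abs_abs, Pi.sub_apply, abs_sub_le_iff]
  have h1 := indicator_bd C x
  have h2 := hb x
  constructor <;> linarith

private lemma good_empty : Good S T μ (∅ : Set X) := by
  refine ⟨MeasurableSet.empty, fun ε hε => ⟨0, Subalgebra.zero_mem _, measurable_const,
    fun x => by norm_num, ?_⟩⟩
  simp only [Set.indicator_empty]
  simpa using hε.le

private lemma good_compl {C : Set X} (h : Good S T μ C) : Good S T μ Cᶜ := by
  obtain ⟨hCm, happ⟩ := h
  refine ⟨hCm.compl, fun ε hε => ?_⟩
  obtain ⟨φ, hφmem, hφm, hφb, hφe⟩ := happ ε hε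
  refine ⟨(1 : X → ℝ) - φ, Subalgebra.sub_mem _ (Subalgebra.one_mem _) hφmem,
    measurable_const.sub hφm, fun x => ?_, ?_⟩
  · have := hφb x
    constructor <;> simp only [Pi.sub_apply, Pi.one_apply] <;> linarith
  · have heq : ∀ x, |Cᶜ.indicator (fun _ => (1:ℝ)) x - ((1 : X → ℝ) - φ) x|
        = |C.indicator (fun _ => (1:ℝ)) x - φ x| := by
      intro x
      by_cases hx : x ∈ C
      · rw [Set.indicator_of_mem hx, Set.indicator_of_notMem (by simpa using hx)]
        simp only [Pi.sub_apply, Pi.one_apply]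
        rw [show (0:ℝ) - (1 - φ x) = -(1 - φ x) by ring, abs_neg]
      · rw [Set.indicator_of_notMem hx, Set.indicator_of_mem (by simpa using hx)]
        simp only [Pi.sub_apply, Pi.one_apply]
        rw [show (1:ℝ) - (1 - φ x) = φ x by ring,
          show (0:ℝ) - φ x = -φ x by ring, abs_neg]
    calc ∫ x, |Cᶜ.indicator (fun _ => (1:ℝ)) x - ((1 : X → ℝ) - φ) x| ∂μ
        = ∫ x, |C.indicator (fun _ => (1:ℝ)) x - φ x| ∂μ := by
          apply integral_congr_ae
          exact ae_of_all _ heq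
      _ ≤ ε := hφe

private lemma good_inter {C D : Set X} (hC : Good S T μ C) (hD : Good S T μ D) :
    Good S T μ (C ∩ D) := by
  obtain ⟨hCm, happC⟩ := hC
  obtain ⟨hDm, happD⟩ := hD
  refine ⟨hCm.inter hDm, fun ε hε => ?_⟩
  obtain ⟨φ, hφmem, hφm, hφb, hφe⟩ := happC (ε/2) (by linarith)
  obtain ⟨ψ, hψmem, hψm, hψb, hψe⟩ := happD (ε/2) (by linarith)
  refine ⟨φ * ψ, Subalgebra.mul_mem _ hφmem hψmem, hφm.mul hψm, fun x => ?_, ?_⟩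
  · have h1 := hφb x
    have h2 := hψb x
    constructor
    · exact mul_nonneg h1.1 h2.1
    · exact mul_le_one₀ h1.2 h2.1 h2.2
  · have hpt : ∀ x, |(C ∩ D).indicator (fun _ => (1:ℝ)) x - (φ * ψ) x|
        ≤ |C.indicator (fun _ => (1:ℝ)) x - φ x| + |D.indicator (fun _ => (1:ℝ)) x - ψ x| := by
      intro x
      have hind : (C ∩ D).indicator (fun _ => (1:ℝ)) x
          = C.indicator (fun _ => (1:ℝ)) x * D.indicator (fun _ => (1:ℝ)) x := by
        by_cases hx : x ∈ C ∩ D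
        · rw [Set.indicator_of_mem hx, Set.indicator_of_mem hx.1, Set.indicator_of_mem hx.2]
          norm_num
        · rw [Set.indicator_of_notMem hx]
          rcases (Set.mem_inter_iff x C D).not.1 hx |> not_and_or.1 with h|h
          · rw [Set.indicator_of_notMem h, zero_mul]
          · rw [Set.indicator_of_notMem h, mul_zero]
      rw [hind]
      set a := C.indicator (fun _ => (1:ℝ)) x
      set b := D.indicator (fun _ => (1:ℝ)) x
      have hab : a * b - (φ * ψ) x = (a - φ x) * b + φ x * (b - ψ x) := by
        simp only [Pi.mul_apply]
        ring
      rw [hab]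
      have hb1 : |b| ≤ 1 := by
        have := indicator_bd D x
        rw [abs_le]; constructor <;> simp only [b] <;> linarith
      have hφ1 : |φ x| ≤ 1 := by
        have := hφb x
        rw [abs_le]; constructor <;> linarith
      calc |(a - φ x) * b + φ x * (b - ψ x)|
          ≤ |(a - φ x) * b| + |φ x * (b - ψ x)| := abs_add_le _ _
        _ = |a - φ x| * |b| + |φ x| * |b - ψ x| := by rw [abs_mul, abs_mul]
        _ ≤ |a - φ x| * 1 + 1 * |b - ψ x| := by
            apply add_le_add
            · exact mul_le_mul_of_nonneg_left hb1 (abs_nonneg _)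
            · exact mul_le_mul_of_nonneg_right hφ1 (abs_nonneg _)
        _ = |a - φ x| + |b - ψ x| := by ring
    have hint : ∫ x, |(C ∩ D).indicator (fun _ => (1:ℝ)) x - (φ * ψ) x| ∂μ
        ≤ ∫ x, (|C.indicator (fun _ => (1:ℝ)) x - φ x|
            + |D.indicator (fun _ => (1:ℝ)) x - ψ x|) ∂μ := by
      apply integral_mono
      · exact err_integrable (hCm.inter hDm) (hφm.mul hψm) (fun x =>
          ⟨mul_nonneg (hφb x).1 (hψb x).1, mul_le_one₀ (hφb x).2 (hψb x).1 (hψb x).2⟩)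
      · exact (err_integrable hCm hφm hφb).add (err_integrable hDm hψm hψb)
      · exact hpt
    rw [integral_add (err_integrable hCm hφm hφb) (err_integrable hDm hψm hψb)] at hint
    linarith

private lemma good_union {C D : Set X} (hC : Good S T μ C) (hD : Good S T μ D) :
    Good S T μ (C ∪ D) := by
  have h1 : C ∪ D = (Cᶜ ∩ Dᶜ)ᶜ := by
    rw [Set.compl_inter, compl_compl, compl_compl]
  rw [h1]
  exact good_compl (good_inter (good_compl hC) (good_compl hD))

private lemma good_iUnion {s : ℕ → Set X} (h : ∀ n, Good S T μ (s n)) :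
    Good S T μ (⋃ n, s n) := by
  have hsm : ∀ n, MeasurableSet (s n) := fun n => (h n).1
  have hUm : MeasurableSet (⋃ n, s n) := MeasurableSet.iUnion hsm
  refine ⟨hUm, fun ε hε => ?_⟩
  -- finite unions
  set F : ℕ → Set X := fun m => ⋃ n ∈ Finset.range (m+1), s n with hF
  have hFgood : ∀ m, Good S T μ (F m) := by
    intro m
    induction m with
    | zero => simpa [hF] using h 0
    | succ m ih =>
      have : F (m+1) = F m ∪ s (m+1) := by
        simp only [hF]
        rw [Finset.range_add_one, Finset.set_biUnion_insert, Set.union_comm]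
      rw [this]
      exact good_union ih (h (m+1))
  have hFm : ∀ m, MeasurableSet (F m) := fun m => (hFgood m).1
  have hFsub : ∀ m, F m ⊆ ⋃ n, s n := by
    intro m x hx
    simp only [hF, Set.mem_iUnion] at hx ⊢
    obtain ⟨n, _, hn⟩ := hx
    exact ⟨n, hn⟩
  -- the leftover sets shrink to ∅
  set D : ℕ → Set X := fun m => (⋃ n, s n) \ F m with hD
  have hDinter : ⋂ m, D m = ∅ := by
    apply Set.eq_empty_iff_forall_notMem.2
    intro x hx
    rw [Set.mem_iInter] at hx
    obtain ⟨n, hn⟩ := Set.mem_iUnion.1 (hx 0).1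
    apply (hx n).2
    simp only [hF, Set.mem_iUnion]
    exact ⟨n, Finset.self_mem_range_succ n, hn⟩
  have hDtend : Tendsto (fun m => μ (D m)) atTop (nhds 0) := by
    have := tendsto_measure_iInter_atTop (μ := μ)
      (fun m => (hUm.diff (hFm m)).nullMeasurableSet)
      (fun a b hab => Set.diff_subset_diff_right (by
        intro x hx
        simp only [hF, Set.mem_iUnion] at hx ⊢
        obtain ⟨n, hn1, hn2⟩ := hx
        exact ⟨n, Finset.mem_range.2 (lt_of_lt_of_le (Finset.mem_range.1 hn1)
          (by omega)), hn2⟩))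
      ⟨0, measure_ne_top μ _⟩
    rw [hDinter, measure_empty] at this
    exact this
  have hev : ∀ᶠ m in atTop, μ (D m) < ENNReal.ofReal (ε/2) :=
    hDtend.eventually_lt_const (by simp [ENNReal.ofReal_pos]; linarith)
  obtain ⟨m, hm⟩ := hev.exists
  obtain ⟨φ, hφmem, hφm, hφb, hφe⟩ := (hFgood m).2 (ε/2) (by linarith)
  refine ⟨φ, hφmem, hφm, hφb, ?_⟩
  have hpt : ∀ x, |(⋃ n, s n).indicator (fun _ => (1:ℝ)) x - φ x|
      ≤ (D m).indicator (fun _ => (1:ℝ)) x + |(F m).indicator (fun _ => (1:ℝ)) x - φ x| := by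
    intro x
    have hdiff : |(⋃ n, s n).indicator (fun _ => (1:ℝ)) x - (F m).indicator (fun _ => (1:ℝ)) x|
        = (D m).indicator (fun _ => (1:ℝ)) x := by
      by_cases hx : x ∈ F m
      · rw [Set.indicator_of_mem hx, Set.indicator_of_mem (hFsub m hx),
          Set.indicator_of_notMem (fun hc => hc.2 hx)]
        norm_num
      · by_cases hx2 : x ∈ ⋃ n, s n
        · rw [Set.indicator_of_mem hx2, Set.indicator_of_notMem hx,
            Set.indicator_of_mem (show x ∈ D m from ⟨hx2, hx⟩)]
          norm_num
        · rw [Set.indicator_of_notMem hx2, Set.indicator_of_notMem hx,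
            Set.indicator_of_notMem (fun hc => hx2 hc.1)]
          norm_num
    calc |(⋃ n, s n).indicator (fun _ => (1:ℝ)) x - φ x|
        ≤ |(⋃ n, s n).indicator (fun _ => (1:ℝ)) x - (F m).indicator (fun _ => (1:ℝ)) x|
          + |(F m).indicator (fun _ => (1:ℝ)) x - φ x| := by
          have : (⋃ n, s n).indicator (fun _ => (1:ℝ)) x - φ x
              = ((⋃ n, s n).indicator (fun _ => (1:ℝ)) x - (F m).indicator (fun _ => (1:ℝ)) x)
                + ((F m).indicator (fun _ => (1:ℝ)) x - φ x) := by ring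
          rw [this]
          exact abs_add_le _ _
      _ = (D m).indicator (fun _ => (1:ℝ)) x + |(F m).indicator (fun _ => (1:ℝ)) x - φ x| := by
          rw [hdiff]
  have hiD : Integrable (fun x => (D m).indicator (fun _ => (1:ℝ)) x) μ :=
    (integrable_const (1:ℝ)).indicator (hUm.diff (hFm m))
  have hint : ∫ x, |(⋃ n, s n).indicator (fun _ => (1:ℝ)) x - φ x| ∂μ
      ≤ ∫ x, ((D m).indicator (fun _ => (1:ℝ)) x
          + |(F m).indicator (fun _ => (1:ℝ)) x - φ x|) ∂μ := by
    apply integral_mono (err_integrable hUm hφm hφb)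
      (hiD.add (err_integrable (hFm m) hφm hφb)) hpt
  rw [integral_add hiD (err_integrable (hFm m) hφm hφb), integral_indicator
    (hUm.diff (hFm m))] at hint
  have hμD : ∫ x in D m, (1:ℝ) ∂μ ≤ ε/2 := by
    rw [setIntegral_const, smul_eq_mul, mul_one]
    have := ENNReal.toReal_mono (by simp) hm.le
    rwa [ENNReal.toReal_ofReal (by linarith)] at this
  linarith

private lemma indicator_invariant {R : X → X} {A : Set X} (hA : R ⁻¹' A = A) (x : X) :
    A.indicator (fun _ => (1:ℝ)) (R x) = A.indicator (fun _ => (1:ℝ)) x := by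
  by_cases hx : x ∈ A
  · have hx' : R x ∈ A := by rw [← hA] at hx; exact hx
    rw [Set.indicator_of_mem hx, Set.indicator_of_mem hx']
  · have hx' : R x ∉ A := fun hc => hx (hA ▸ (hc : x ∈ R ⁻¹' A))
    rw [Set.indicator_of_notMem hx, Set.indicator_of_notMem hx']

private lemma indicator_abs_le (A : Set X) (x : X) : |A.indicator (fun _ => (1:ℝ)) x| ≤ 1 := by
  have := indicator_bd A x
  rw [abs_le]
  constructor <;> linarith

/-- Generators: invariant sets for `S` (paired with the constant `1`). -/
private lemma good_gen_S {A : Set X} (hA : MeasurableSet[invSigma S] A) : Good S T μ A := by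
  refine ⟨hA.1, fun ε hε => ?_⟩
  have hmem : A.indicator (fun _ => (1:ℝ)) ∈ prodSet S T := by
    exact ⟨A.indicator (fun _ => (1:ℝ)), fun _ => 1, measurable_const.indicator hA.1,
      measurable_const, indicator_invariant hA.2, fun _ => rfl, indicator_abs_le A,
      fun _ => by norm_num, by funext x; simp⟩
  refine ⟨A.indicator (fun _ => (1:ℝ)), Algebra.subset_adjoin hmem,
    measurable_const.indicator hA.1, fun x => indicator_bd A x, ?_⟩
  simp only [sub_self, abs_zero]
  simpa using hε.le

private lemma good_gen_T {A : Set X} (hA : MeasurableSet[invSigma T] A) : Good S T μ A := by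
  refine ⟨hA.1, fun ε hε => ?_⟩
  have hmem : A.indicator (fun _ => (1:ℝ)) ∈ prodSet S T := by
    exact ⟨fun _ => 1, A.indicator (fun _ => (1:ℝ)), measurable_const,
      measurable_const.indicator hA.1, fun _ => rfl, indicator_invariant hA.2,
      fun _ => by norm_num, indicator_abs_le A, by funext x; simp⟩
  refine ⟨A.indicator (fun _ => (1:ℝ)), Algebra.subset_adjoin hmem,
    measurable_const.indicator hA.1, fun x => indicator_bd A x, ?_⟩
  simp only [sub_self, abs_zero]
  simpa using hε.le

/-- Every set measurable w.r.t. `invSigma S ⊔ invSigma T` is good. -/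
private lemma good_of_join {C : Set X}
    (hC : MeasurableSet[invSigma S ⊔ invSigma T] C) : Good S T μ C := by
  have hgen : invSigma S ⊔ invSigma T = MeasurableSpace.generateFrom
      ({s | MeasurableSet[invSigma S] s} ∪ {s | MeasurableSet[invSigma T] s}) := by
    conv_lhs => rw [← @MeasurableSpace.generateFrom_measurableSet X (invSigma S),
      ← @MeasurableSpace.generateFrom_measurableSet X (invSigma T)]
    exact MeasurableSpace.generateFrom_sup_generateFrom
  rw [hgen] at hC
  refine MeasurableSpace.generateFrom_induction
    (p := fun s _ => Good S T μ s) _ ?_ good_empty (fun t _ ht => good_compl ht)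
    (fun f _ hf => good_iUnion hf) C hC
  rintro t (ht|ht) _
  · exact good_gen_S ht
  · exact good_gen_T ht

end GoodSets

section ApproxStep
set_option linter.unusedSectionVars false

variable {X : Type*} [MeasurableSpace X] {μ : Measure X} [IsProbabilityMeasure μ]
variable {S T : X → X}

private lemma birkLim_abs_le {R : X → X} {ψ : X → ℝ} {C : ℝ} (hC : 0 ≤ C)
    (hψb : ∀ x, |ψ x| ≤ C) (x : X) : |birkLim R ψ x| ≤ C := by
  rw [abs_le]
  constructor
  · apply le_limsup_of_frequently_le
    · exact Frequently.of_forall fun n =>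
        (abs_le.1 (abs_birkhoffAverage_le hC hψb n x)).1
    · exact bdd_above_of_abs fun n => abs_birkhoffAverage_le hC hψb n x
  · apply limsup_le_of_le
    · exact (bdd_below_of_abs fun n => abs_birkhoffAverage_le hC hψb n x).isCoboundedUnder_le
    · exact Eventually.of_forall fun n => (abs_le.1 (abs_birkhoffAverage_le hC hψb n x)).2

/-- The double average of a nonnegative function is dominated by the Birkhoff average
along `T` of the `S`-maximal function. -/
private lemma dAvg_le_avg_maxAvg {u : X → ℝ} {Cu : ℝ} (hCu : 0 ≤ Cu) (hu0 : ∀ x, 0 ≤ u x)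
    (hub : ∀ x, |u x| ≤ Cu) {N : ℕ} (hN : 1 ≤ N) (x : X) :
    ((N:ℝ)^2)⁻¹ * ∑ i ∈ Finset.range N, ∑ j ∈ Finset.range N, u (S^[i] (T^[j] x))
      ≤ birkhoffAverage ℝ T (maxAvg S u) N x := by
  rw [Finset.sum_comm]
  have h1 : ((N:ℝ)^2)⁻¹ * ∑ j ∈ Finset.range N, ∑ i ∈ Finset.range N, u (S^[i] (T^[j] x))
      = (N:ℝ)⁻¹ * ∑ j ∈ Finset.range N, birkhoffAverage ℝ S u N (T^[j] x) := by
    rw [Finset.mul_sum, Finset.mul_sum]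
    apply Finset.sum_congr rfl
    intro j _
    rw [birkhoffAverage, smul_eq_mul]
    unfold birkhoffSum
    rw [sq, mul_inv]
    ring
  rw [h1]
  have h2 : ∑ j ∈ Finset.range N, birkhoffAverage ℝ S u N (T^[j] x)
      ≤ ∑ j ∈ Finset.range N, maxAvg S u (T^[j] x) :=
    Finset.sum_le_sum fun j _ => avg_le_maxAvg hCu hub hN (T^[j] x)
  calc (N:ℝ)⁻¹ * ∑ j ∈ Finset.range N, birkhoffAverage ℝ S u N (T^[j] x)
      ≤ (N:ℝ)⁻¹ * ∑ j ∈ Finset.range N, maxAvg S u (T^[j] x) := by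
        apply mul_le_mul_of_nonneg_left h2 (by positivity)
    _ = birkhoffAverage ℝ T (maxAvg S u) N x := by
        rw [birkhoffAverage, smul_eq_mul]
        unfold birkhoffSum
        rfl

/-- Error comparison between triple averages. -/
private lemma tAvg_err {f1 f2 f3 φ : X → ℝ} {C1 C2 : ℝ} (hC1 : 0 ≤ C1) (hC2 : 0 ≤ C2)
    (hb1 : ∀ x, |f1 x| ≤ C1) (hb2 : ∀ x, |f2 x| ≤ C2) (N : ℕ) (x : X) :
    |tAvg S T f1 f2 f3 N x - tAvg S T f1 f2 φ N x|
      ≤ C1 * C2 * (((N:ℝ)^2)⁻¹ * ∑ i ∈ Finset.range N, ∑ j ∈ Finset.range N,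
          |f3 (S^[i] (T^[j] x)) - φ (S^[i] (T^[j] x))|) := by
  unfold tAvg
  rw [← mul_sub, ← Finset.sum_sub_distrib]
  have hsum : ∀ i, ∑ j ∈ Finset.range N,
        f1 (S^[i] x) * f2 (T^[j] x) * f3 (S^[i] (T^[j] x))
        - ∑ j ∈ Finset.range N, f1 (S^[i] x) * f2 (T^[j] x) * φ (S^[i] (T^[j] x))
      = ∑ j ∈ Finset.range N, f1 (S^[i] x) * f2 (T^[j] x)
          * (f3 (S^[i] (T^[j] x)) - φ (S^[i] (T^[j] x))) := by
    intro i
    rw [← Finset.sum_sub_distrib]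
    apply Finset.sum_congr rfl
    intro j _
    ring
  have hD : |∑ i ∈ Finset.range N, (∑ j ∈ Finset.range N,
        f1 (S^[i] x) * f2 (T^[j] x) * f3 (S^[i] (T^[j] x))
        - ∑ j ∈ Finset.range N, f1 (S^[i] x) * f2 (T^[j] x) * φ (S^[i] (T^[j] x)))|
      ≤ C1 * C2 * ∑ i ∈ Finset.range N, ∑ j ∈ Finset.range N,
          |f3 (S^[i] (T^[j] x)) - φ (S^[i] (T^[j] x))| := by
    calc |∑ i ∈ Finset.range N, (∑ j ∈ Finset.range N,
          f1 (S^[i] x) * f2 (T^[j] x) * f3 (S^[i] (T^[j] x))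
          - ∑ j ∈ Finset.range N, f1 (S^[i] x) * f2 (T^[j] x) * φ (S^[i] (T^[j] x)))|
        ≤ ∑ i ∈ Finset.range N, |∑ j ∈ Finset.range N, f1 (S^[i] x) * f2 (T^[j] x)
            * (f3 (S^[i] (T^[j] x)) - φ (S^[i] (T^[j] x)))| := by
          rw [show (fun i => ∑ j ∈ Finset.range N,
              f1 (S^[i] x) * f2 (T^[j] x) * f3 (S^[i] (T^[j] x))
              - ∑ j ∈ Finset.range N, f1 (S^[i] x) * f2 (T^[j] x) * φ (S^[i] (T^[j] x)))
            = (fun i => ∑ j ∈ Finset.range N, f1 (S^[i] x) * f2 (T^[j] x)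
              * (f3 (S^[i] (T^[j] x)) - φ (S^[i] (T^[j] x)))) from funext hsum]
          exact Finset.abs_sum_le_sum_abs _ _
      _ ≤ ∑ i ∈ Finset.range N, ∑ j ∈ Finset.range N,
            C1 * C2 * |f3 (S^[i] (T^[j] x)) - φ (S^[i] (T^[j] x))| := by
          apply Finset.sum_le_sum
          intro i _
          refine (Finset.abs_sum_le_sum_abs _ _).trans ?_
          apply Finset.sum_le_sum
          intro j _
          rw [abs_mul, abs_mul]
          apply mul_le_mul
          · apply mul_le_mul (hb1 _) (hb2 _) (abs_nonneg _) hC1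
          · exact le_refl _
          · exact abs_nonneg _
          · exact mul_nonneg hC1 hC2
      _ = C1 * C2 * ∑ i ∈ Finset.range N, ∑ j ∈ Finset.range N,
            |f3 (S^[i] (T^[j] x)) - φ (S^[i] (T^[j] x))| := by
          rw [Finset.mul_sum]
          apply Finset.sum_congr rfl
          intro i _
          rw [Finset.mul_sum]
  rw [abs_mul, abs_inv, abs_pow, Nat.abs_cast]
  calc ((N:ℝ)^2)⁻¹ * |∑ i ∈ Finset.range N, (∑ j ∈ Finset.range N,
        f1 (S^[i] x) * f2 (T^[j] x) * f3 (S^[i] (T^[j] x))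
        - ∑ j ∈ Finset.range N, f1 (S^[i] x) * f2 (T^[j] x) * φ (S^[i] (T^[j] x)))|
      ≤ ((N:ℝ)^2)⁻¹ * (C1 * C2 * ∑ i ∈ Finset.range N, ∑ j ∈ Finset.range N,
          |f3 (S^[i] (T^[j] x)) - φ (S^[i] (T^[j] x))|) := by
        apply mul_le_mul_of_nonneg_left hD (by positivity)
    _ = C1 * C2 * (((N:ℝ)^2)⁻¹ * ∑ i ∈ Finset.range N, ∑ j ∈ Finset.range N,
          |f3 (S^[i] (T^[j] x)) - φ (S^[i] (T^[j] x))|) := by ring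


set_option maxHeartbeats 1000000 in
/-- The main approximation step. -/
private lemma approx_step (hS : MeasurePreserving S μ μ) (hT : MeasurePreserving T μ μ)
    {f3 : X → ℝ} {C3 : ℝ} (hC3 : 0 ≤ C3)
    (hf3 : Measurable[invSigma S ⊔ invSigma T] f3) (hb3 : ∀ x, |f3 x| ≤ C3)
    {δ τ : ℝ} (hδ : 0 < δ) (hτ : 0 < τ) :
    ∃ (φ B : X → ℝ), φ ∈ Algebra.adjoin ℝ (prodSet S T) ∧ Measurable φ ∧ Measurable B ∧
      (∀ x, 0 ≤ B x) ∧ (∃ CB, ∀ x, |B x| ≤ CB) ∧ (∫ x, B x ∂μ ≤ τ) ∧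
      (∀ᵐ x ∂μ, ∀ ρ > (0:ℝ), ∀ᶠ N : ℕ in atTop,
        ((N:ℝ)^2)⁻¹ * ∑ i ∈ Finset.range N, ∑ j ∈ Finset.range N,
          |f3 (S^[i] (T^[j] x)) - φ (S^[i] (T^[j] x))| ≤ δ + B x + ρ) := by
  classical
  obtain ⟨n0, hn0⟩ := exists_nat_one_div_lt hδ
  set m : ℕ := n0 + 1 with hm
  have hm1 : (1:ℝ) ≤ m := by exact_mod_cast Nat.succ_le_succ (Nat.zero_le n0)
  have hm0 : (0:ℝ) < m := by linarith
  have hmδ : 1 / (m:ℝ) ≤ δ := by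
    rw [hm]
    push_cast
    exact le_of_lt hn0
  set M : ℤ := (m : ℤ) * (⌈C3⌉ + 1) with hM
  set K : Finset ℤ := Finset.Icc (-M) M with hK
  set Cs : ℤ → Set X := fun k => (fun x => ⌊(m:ℝ) * f3 x⌋) ⁻¹' {k} with hCs
  have hCk : ∀ k, MeasurableSet[invSigma S ⊔ invSigma T] (Cs k) := by
    intro k
    have hBset : MeasurableSet ((fun r : ℝ => ⌊(m:ℝ) * r⌋) ⁻¹' {k}) :=
      (measurable_id.const_mul (m:ℝ)).floor (measurableSet_singleton k)
    exact hf3 hBset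
  have hCgood : ∀ k, Good S T μ (Cs k) := fun k => good_of_join (hCk k)
  have hceil : C3 ≤ (⌈C3⌉:ℝ) + 1 := le_trans (Int.le_ceil C3) (by linarith)
  have hfK : ∀ x, ⌊(m:ℝ) * f3 x⌋ ∈ K := by
    intro x
    have hb := abs_le.1 (hb3 x)
    have hub : (m:ℝ) * f3 x ≤ ((M:ℤ):ℝ) := by
      rw [hM]
      push_cast
      nlinarith [hb.2, hceil, hm0, hm1]
    have hlb : (((-M : ℤ)):ℝ) ≤ (m:ℝ) * f3 x := by
      rw [hM]
      push_cast
      nlinarith [hb.1, hceil, hm0, hm1]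
    rw [hK, Finset.mem_Icc]
    exact ⟨Int.le_floor.2 hlb, le_trans (Int.floor_mono hub) (le_of_eq (Int.floor_intCast M))⟩
  set s : X → ℝ := fun x => ∑ k ∈ K, ((k:ℝ)/m) * (Cs k).indicator (fun _ => (1:ℝ)) x
    with hs
  have hsval : ∀ x, s x = ((⌊(m:ℝ) * f3 x⌋ : ℤ) : ℝ) / m := by
    intro x
    rw [hs]
    simp only
    rw [Finset.sum_eq_single (⌊(m:ℝ) * f3 x⌋)]
    · rw [Set.indicator_of_mem (show x ∈ Cs ⌊(m:ℝ) * f3 x⌋ from rfl), mul_one]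
    · intro k _ hk
      rw [Set.indicator_of_notMem, mul_zero]
      simp only [hCs, Set.mem_preimage, Set.mem_singleton_iff]
      exact fun hc => hk hc.symm
    · intro hc
      exact absurd (hfK x) hc
  have hserr : ∀ x, |f3 x - s x| ≤ δ := by
    intro x
    rw [hsval x]
    have h1 : ((⌊(m:ℝ) * f3 x⌋ : ℤ) : ℝ) ≤ (m:ℝ) * f3 x := Int.floor_le _
    have h2 : (m:ℝ) * f3 x < ((⌊(m:ℝ) * f3 x⌋ : ℤ) : ℝ) + 1 := Int.lt_floor_add_one _
    rw [abs_le]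
    constructor
    · have h3 : ((⌊(m:ℝ) * f3 x⌋ : ℤ) : ℝ) / m ≤ f3 x := by
        rw [div_le_iff₀ hm0]
        nlinarith
      linarith
    · have h3 : f3 x - ((⌊(m:ℝ) * f3 x⌋ : ℤ) : ℝ) / m ≤ 1/m := by
        rw [sub_le_iff_le_add, ← add_div, le_div_iff₀ hm0]
        nlinarith
      linarith
  set c : ℤ → ℝ := fun k => |(k:ℝ)/m| with hc
  have hc0 : ∀ k, 0 ≤ c k := fun k => abs_nonneg _
  set W : ℝ := ∑ k ∈ K, c k with hW
  have hW0 : 0 ≤ W := Finset.sum_nonneg fun k _ => hc0 k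
  set lam : ℝ := τ / (2 * (W + 1)) with hlam
  have hlam0 : 0 < lam := by
    rw [hlam]
    positivity
  have hφex : ∀ k : ℤ, ∃ φk : X → ℝ, φk ∈ Algebra.adjoin ℝ (prodSet S T) ∧ Measurable φk ∧
      (∀ x, 0 ≤ φk x ∧ φk x ≤ 1) ∧
      ∫ x, |(Cs k).indicator (fun _ => (1:ℝ)) x - φk x| ∂μ ≤ lam * lam :=
    fun k => (hCgood k).2 (lam * lam) (by positivity)
  choose φk hφkmem hφkm hφkb hφke using hφex
  set e : ℤ → X → ℝ := fun k x => |(Cs k).indicator (fun _ => (1:ℝ)) x - φk k x| with he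
  have hem : ∀ k, Measurable (e k) := fun k =>
    ((measurable_const.indicator (hCgood k).1).sub (hφkm k)).abs
  have he0 : ∀ k x, 0 ≤ e k x := fun k x => abs_nonneg _
  have heb : ∀ k x, |e k x| ≤ 1 := by
    intro k x
    rw [he]
    simp only
    rw [abs_abs, abs_sub_le_iff]
    have h1 := indicator_bd (Cs k) x
    have h2 := hφkb k x
    constructor <;> linarith
  set Ψ : ℤ → X → ℝ := fun k => maxAvg S (e k) with hΨ
  have hΨm : ∀ k, Measurable (Ψ k) := fun k => maxAvg_measurable hS.measurable (hem k)
  have hΨb : ∀ k x, |Ψ k x| ≤ 1 := fun k x =>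
    maxAvg_abs_le zero_le_one (he0 k) (heb k) x
  set G : ℤ → X → ℝ := fun k => birkLim T (Ψ k) with hG
  have hGm : ∀ k, Measurable (G k) := fun k =>
    birkLim_measurable hT.measurable (hΨm k)
  have hG0 : ∀ k x, 0 ≤ G k x := fun k x =>
    birkLim_nonneg zero_le_one (fun y => maxAvg_nonneg zero_le_one (he0 k) (heb k) y)
      (hΨb k) x
  have hGb : ∀ k x, |G k x| ≤ 1 := fun k x => birkLim_abs_le zero_le_one (hΨb k) x
  have hGint : ∀ k, ∫ x, G k x ∂μ ≤ τ / (W + 1) := by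
    intro k
    have h1 : ∫ x, G k x ∂μ = ∫ x, Ψ k x ∂μ :=
      birkLim_integral hT zero_le_one (hΨm k) (hΨb k)
    have h2 : ∫ x, Ψ k x ∂μ ≤ lam + 1 * (∫ x, e k x ∂μ) / lam :=
      maxAvg_integral_le hS (hem k) zero_le_one (he0 k) (heb k) hlam0
    have h3 : ∫ x, e k x ∂μ ≤ lam * lam := hφke k
    have h4 : (∫ x, e k x ∂μ) / lam ≤ lam := by
      rw [div_le_iff₀ hlam0]
      exact h3
    have h5 : lam + lam = τ / (W + 1) := by
      rw [hlam]
      field_simp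
      ring
    have h2' : ∫ x, Ψ k x ∂μ ≤ lam + (∫ x, e k x ∂μ) / lam := by
      calc ∫ x, Ψ k x ∂μ ≤ lam + 1 * (∫ x, e k x ∂μ) / lam := h2
        _ = lam + (∫ x, e k x ∂μ) / lam := by rw [one_mul]
    linarith [h1, h2', h4, h5]
  set B : X → ℝ := fun x => ∑ k ∈ K, c k * G k x with hB
  have hBm : Measurable B := Finset.measurable_sum _ fun k _ => (hGm k).const_mul (c k)
  have hB0 : ∀ x, 0 ≤ B x := fun x =>
    Finset.sum_nonneg fun k _ => mul_nonneg (hc0 k) (hG0 k x)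
  have hBb : ∀ x, |B x| ≤ W := by
    intro x
    rw [hB]
    simp only
    refine (Finset.abs_sum_le_sum_abs _ _).trans ?_
    rw [hW]
    apply Finset.sum_le_sum
    intro k _
    rw [abs_mul, abs_of_nonneg (hc0 k)]
    calc c k * |G k x| ≤ c k * 1 := mul_le_mul_of_nonneg_left (hGb k x) (hc0 k)
      _ = c k := mul_one _
  have hGintg : ∀ k, Integrable (fun x => c k * G k x) μ := by
    intro k
    apply integrable_of_bdd (C := c k) ((hGm k).const_mul (c k))
    intro x
    rw [abs_mul, abs_of_nonneg (hc0 k)]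
    calc c k * |G k x| ≤ c k * 1 := mul_le_mul_of_nonneg_left (hGb k x) (hc0 k)
      _ = c k := mul_one _
  have hBint : ∫ x, B x ∂μ ≤ τ := by
    have h1 : ∫ x, B x ∂μ = ∑ k ∈ K, c k * ∫ x, G k x ∂μ := by
      rw [hB]
      rw [integral_finset_sum _ (fun k _ => hGintg k)]
      exact Finset.sum_congr rfl fun k _ => integral_const_mul _ _
    rw [h1]
    calc ∑ k ∈ K, c k * ∫ x, G k x ∂μ ≤ ∑ k ∈ K, c k * (τ / (W + 1)) :=
          Finset.sum_le_sum fun k _ => mul_le_mul_of_nonneg_left (hGint k) (hc0 k)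
      _ = W * (τ / (W + 1)) := by rw [← Finset.sum_mul]
      _ ≤ τ := by
          rw [mul_div_assoc', div_le_iff₀ (by linarith : (0:ℝ) < W + 1)]
          nlinarith
  set φ : X → ℝ := ∑ k ∈ K, ((k:ℝ)/m) • φk k with hφ
  have hφapp : ∀ y, φ y = ∑ k ∈ K, ((k:ℝ)/m) * φk k y := by
    intro y
    rw [hφ, Finset.sum_apply]
    exact Finset.sum_congr rfl fun k _ => by simp [smul_eq_mul]
  have hφmem : φ ∈ Algebra.adjoin ℝ (prodSet S T) :=
    Subalgebra.sum_mem _ fun k _ => Subalgebra.smul_mem _ (hφkmem k) _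
  have hφm : Measurable φ := by
    have : φ = fun y => ∑ k ∈ K, ((k:ℝ)/m) * φk k y := funext hφapp
    rw [this]
    exact Finset.measurable_sum _ fun k _ => (hφkm k).const_mul _
  have hpt : ∀ y, |f3 y - φ y| ≤ δ + ∑ k ∈ K, c k * e k y := by
    intro y
    have h1 : f3 y - φ y = (f3 y - s y) + (s y - φ y) := by ring
    have h2 : |s y - φ y| ≤ ∑ k ∈ K, c k * e k y := by
      rw [hφapp, hs]
      simp only
      rw [← Finset.sum_sub_distrib]
      refine (Finset.abs_sum_le_sum_abs _ _).trans ?_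
      apply Finset.sum_le_sum
      intro k _
      rw [← mul_sub, abs_mul]
    calc |f3 y - φ y| ≤ |f3 y - s y| + |s y - φ y| := by rw [h1]; exact abs_add_le _ _
      _ ≤ δ + ∑ k ∈ K, c k * e k y := add_le_add (hserr y) h2
  refine ⟨φ, B, hφmem, hφm, hBm, hB0, ⟨W, hBb⟩, hBint, ?_⟩
  have haeT : ∀ᵐ x ∂μ, ∀ k : ℤ, Tendsto (fun N => birkhoffAverage ℝ T (Ψ k) N x) atTop
      (nhds (G k x)) := by
    rw [ae_all_iff]
    intro k
    exact birkLim_ae_tendsto hT (hΨm k) (hΨb k)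
  filter_upwards [haeT] with x hx
  intro ρ hρ
  have hev1 : ∀ᶠ N in atTop, ∀ k ∈ K, birkhoffAverage ℝ T (Ψ k) N x
      ≤ G k x + ρ / (W + 1) := by
    rw [eventually_all_finset]
    intro k _
    have hlt : G k x < G k x + ρ / (W + 1) := by
      have : 0 < ρ / (W + 1) := by positivity
      linarith
    exact (hx k).eventually (eventually_le_nhds hlt)
  filter_upwards [hev1, eventually_ge_atTop 1] with N hN1 hN2
  have hNsq : ((N:ℝ)^2) ≠ 0 := by
    have : (1:ℝ) ≤ N := by exact_mod_cast hN2
    positivity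
  have hswap : ∑ i ∈ Finset.range N, ∑ j ∈ Finset.range N,
      ∑ k ∈ K, c k * e k (S^[i] (T^[j] x))
      = ∑ k ∈ K, ∑ i ∈ Finset.range N, ∑ j ∈ Finset.range N,
        c k * e k (S^[i] (T^[j] x)) := by
    have h1 : ∀ i, ∑ j ∈ Finset.range N, ∑ k ∈ K, c k * e k (S^[i] (T^[j] x))
        = ∑ k ∈ K, ∑ j ∈ Finset.range N, c k * e k (S^[i] (T^[j] x)) :=
      fun i => Finset.sum_comm
    rw [Finset.sum_congr rfl fun i _ => h1 i, Finset.sum_comm]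
  have hA : ∑ i ∈ Finset.range N, ∑ j ∈ Finset.range N,
      (δ + ∑ k ∈ K, c k * e k (S^[i] (T^[j] x)))
      = (N:ℝ)^2 * δ + ∑ k ∈ K, c k * ∑ i ∈ Finset.range N, ∑ j ∈ Finset.range N,
        e k (S^[i] (T^[j] x)) := by
    have e1 : ∀ i : ℕ, ∑ j ∈ Finset.range N, (δ + ∑ k ∈ K, c k * e k (S^[i] (T^[j] x)))
        = (N:ℝ) * δ + ∑ j ∈ Finset.range N, ∑ k ∈ K, c k * e k (S^[i] (T^[j] x)) := by
      intro i
      rw [Finset.sum_add_distrib, Finset.sum_const, Finset.card_range, nsmul_eq_mul]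
    rw [Finset.sum_congr rfl fun i _ => e1 i, Finset.sum_add_distrib, Finset.sum_const,
      Finset.card_range, nsmul_eq_mul, hswap]
    have e2 : ∀ k, ∑ i ∈ Finset.range N, ∑ j ∈ Finset.range N, c k * e k (S^[i] (T^[j] x))
        = c k * ∑ i ∈ Finset.range N, ∑ j ∈ Finset.range N, e k (S^[i] (T^[j] x)) :=
      fun k => by simp only [Finset.mul_sum]
    rw [Finset.sum_congr rfl fun k _ => e2 k]
    ring
  have hstep1 : ((N:ℝ)^2)⁻¹ * ∑ i ∈ Finset.range N, ∑ j ∈ Finset.range N,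
      |f3 (S^[i] (T^[j] x)) - φ (S^[i] (T^[j] x))|
      ≤ δ + ∑ k ∈ K, c k * (((N:ℝ)^2)⁻¹ * ∑ i ∈ Finset.range N, ∑ j ∈ Finset.range N,
        e k (S^[i] (T^[j] x))) := by
    have hsum1 : ∑ i ∈ Finset.range N, ∑ j ∈ Finset.range N,
        |f3 (S^[i] (T^[j] x)) - φ (S^[i] (T^[j] x))|
        ≤ ∑ i ∈ Finset.range N, ∑ j ∈ Finset.range N,
          (δ + ∑ k ∈ K, c k * e k (S^[i] (T^[j] x))) :=
      Finset.sum_le_sum fun i _ => Finset.sum_le_sum fun j _ => hpt _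
    calc ((N:ℝ)^2)⁻¹ * ∑ i ∈ Finset.range N, ∑ j ∈ Finset.range N,
          |f3 (S^[i] (T^[j] x)) - φ (S^[i] (T^[j] x))|
        ≤ ((N:ℝ)^2)⁻¹ * ((N:ℝ)^2 * δ + ∑ k ∈ K, c k * ∑ i ∈ Finset.range N,
            ∑ j ∈ Finset.range N, e k (S^[i] (T^[j] x))) := by
          apply mul_le_mul_of_nonneg_left (hsum1.trans_eq hA) (by positivity)
      _ = δ + ∑ k ∈ K, c k * (((N:ℝ)^2)⁻¹ * ∑ i ∈ Finset.range N,
            ∑ j ∈ Finset.range N, e k (S^[i] (T^[j] x))) := by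
          rw [mul_add, ← mul_assoc, inv_mul_cancel₀ hNsq, one_mul, Finset.mul_sum]
          congr 1
          exact Finset.sum_congr rfl fun k _ => by ring
  have hstep2 : ∀ k ∈ K, ((N:ℝ)^2)⁻¹ * ∑ i ∈ Finset.range N, ∑ j ∈ Finset.range N,
      e k (S^[i] (T^[j] x)) ≤ G k x + ρ / (W + 1) := fun k hk =>
    (dAvg_le_avg_maxAvg zero_le_one (he0 k) (heb k) hN2 x).trans (hN1 k hk)
  calc ((N:ℝ)^2)⁻¹ * ∑ i ∈ Finset.range N, ∑ j ∈ Finset.range N,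
        |f3 (S^[i] (T^[j] x)) - φ (S^[i] (T^[j] x))|
      ≤ δ + ∑ k ∈ K, c k * (((N:ℝ)^2)⁻¹ * ∑ i ∈ Finset.range N, ∑ j ∈ Finset.range N,
          e k (S^[i] (T^[j] x))) := hstep1
    _ ≤ δ + ∑ k ∈ K, c k * (G k x + ρ / (W + 1)) := by
        apply add_le_add (le_refl _)
        exact Finset.sum_le_sum fun k hk =>
          mul_le_mul_of_nonneg_left (hstep2 k hk) (hc0 k)
    _ = δ + (B x + W * (ρ / (W + 1))) := by
        rw [hB, hW]
        simp only
        rw [Finset.sum_mul, ← Finset.sum_add_distrib]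
        congr 1
        exact Finset.sum_congr rfl fun k _ => by ring
    _ ≤ δ + B x + ρ := by
        have hfr : W * (ρ / (W + 1)) ≤ ρ := by
          rw [mul_div_assoc', div_le_iff₀ (by linarith : (0:ℝ) < W + 1)]
          nlinarith
        linarith

end ApproxStep

set_option maxHeartbeats 1000000 in
/-- pointwise convergence of the cubic average when the third function is
measurable with respect to `I_S ∨ I_T`. -/
theorem pointwise_cubic_average_of_invMeasurable {X : Type*} [MeasurableSpace X]
    (μ : Measure X) [IsProbabilityMeasure μ]
    (S T : X ≃ᵐ X) (hS : MeasurePreserving S μ μ) (hT : MeasurePreserving T μ μ)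
    (hcomm : ∀ x, S (T x) = T (S x))
    (herg : ∀ s : Set X, MeasurableSet s → ⇑S ⁻¹' s = s → ⇑T ⁻¹' s = s → μ s = 0 ∨ μ s = 1)
    (f1 f2 f3 : X → ℝ) (hf1 : Measurable f1) (hf2 : Measurable f2)
    (hf3 : Measurable[invSigma ⇑S ⊔ invSigma ⇑T] f3)
    (hb1 : ∃ C, ∀ x, |f1 x| ≤ C) (hb2 : ∃ C, ∀ x, |f2 x| ≤ C) (hb3 : ∃ C, ∀ x, |f3 x| ≤ C) :
    ∀ᵐ x ∂μ, ∃ L : ℝ, Tendsto (fun N : ℕ =>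
      ((N : ℝ) ^ 2)⁻¹ * ∑ i ∈ Finset.range N, ∑ j ∈ Finset.range N,
        f1 ((⇑S)^[i] x) * f2 ((⇑T)^[j] x) * f3 ((⇑S)^[i] ((⇑T)^[j] x)))
      atTop (nhds L) := by
  classical
  obtain ⟨C1, hb1⟩ := hb1
  obtain ⟨C2, hb2⟩ := hb2
  obtain ⟨C3, hb3⟩ := hb3
  have hXne : Nonempty X := nonempty_of_prob μ
  have hC1 : 0 ≤ C1 := le_trans (abs_nonneg _) (hb1 (Classical.arbitrary X))
  have hC2 : 0 ≤ C2 := le_trans (abs_nonneg _) (hb2 (Classical.arbitrary X))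
  have hC3 : 0 ≤ C3 := le_trans (abs_nonneg _) (hb3 (Classical.arbitrary X))
  -- per-level approximations
  have happ : ∀ n : ℕ, ∃ (φ B : X → ℝ),
      φ ∈ Algebra.adjoin ℝ (prodSet ⇑S ⇑T) ∧ Measurable φ ∧ Measurable B ∧
      (∀ x, 0 ≤ B x) ∧ (∃ CB, ∀ x, |B x| ≤ CB) ∧ (∫ x, B x ∂μ ≤ (1/2:ℝ)^n) ∧
      (∀ᵐ x ∂μ, ∀ ρ > (0:ℝ), ∀ᶠ N : ℕ in atTop,
        ((N:ℝ)^2)⁻¹ * ∑ i ∈ Finset.range N, ∑ j ∈ Finset.range N,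
          |f3 ((⇑S)^[i] ((⇑T)^[j] x)) - φ ((⇑S)^[i] ((⇑T)^[j] x))|
          ≤ 1/((n:ℝ)+1) + B x + ρ) :=
    fun n => approx_step hS hT hC3 hf3 hb3 (by positivity) (by positivity)
  choose φn Bn hmem hφm hBm hB0 hBb hBint hae using happ
  -- a.e. convergence for each approximant
  have hconv : ∀ᵐ x ∂μ, ∀ n : ℕ, ∃ L : ℝ,
      Tendsto (fun N => tAvg ⇑S ⇑T f1 f2 (φn n) N x) atTop (nhds L) := by
    rw [ae_all_iff]
    intro n
    exact spanConv hS hT hcomm hf1 hf2 hb1 hb2 (hmem n)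
  have haeB : ∀ᵐ x ∂μ, ∀ n : ℕ, ∀ ρ > (0:ℝ), ∀ᶠ N : ℕ in atTop,
      ((N:ℝ)^2)⁻¹ * ∑ i ∈ Finset.range N, ∑ j ∈ Finset.range N,
        |f3 ((⇑S)^[i] ((⇑T)^[j] x)) - φn n ((⇑S)^[i] ((⇑T)^[j] x))|
        ≤ 1/((n:ℝ)+1) + Bn n x + ρ := ae_all_iff.2 hae
  -- a.e. the bounds B n x tend to zero
  have hB3 : ∀ᵐ x ∂μ, Tendsto (fun n => Bn n x) atTop (nhds 0) := by
    set B' : ℕ → X → ENNReal := fun n x => ENNReal.ofReal (Bn n x) with hB'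
    have hB'm : ∀ n, Measurable (B' n) := fun n => (hBm n).ennreal_ofReal
    have hB'int : ∀ n, ∫⁻ x, B' n x ∂μ ≤ ENNReal.ofReal ((1/2:ℝ)^n) := by
      intro n
      have hint : Integrable (Bn n) μ := by
        obtain ⟨CB, hCB⟩ := hBb n
        exact integrable_of_bdd (hBm n) hCB
      rw [hB']
      rw [← ofReal_integral_eq_lintegral_ofReal hint (ae_of_all _ (hB0 n))]
      exact ENNReal.ofReal_le_ofReal (hBint n)
    have htsum : ∑' n, ∫⁻ x, B' n x ∂μ ≠ ⊤ := by
      have h1 : ∑' n, ∫⁻ x, B' n x ∂μ ≤ ∑' n : ℕ, (ENNReal.ofReal (1/2:ℝ))^n := by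
        apply ENNReal.tsum_le_tsum
        intro n
        refine (hB'int n).trans (le_of_eq ?_)
        rw [← ENNReal.ofReal_pow (by norm_num)]
      have h2 : ∑' n : ℕ, (ENNReal.ofReal (1/2:ℝ))^n = (1 - ENNReal.ofReal (1/2:ℝ))⁻¹ :=
        ENNReal.tsum_geometric _
      have h3 : (1 - ENNReal.ofReal (1/2:ℝ))⁻¹ ≠ ⊤ := by
        rw [ENNReal.inv_ne_top]
        intro hc
        rw [tsub_eq_zero_iff_le] at hc
        have : ENNReal.ofReal (1/2:ℝ) < 1 := by
          rw [ENNReal.ofReal_lt_one]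
          norm_num
        exact absurd hc (not_le.2 this)
      exact ne_top_of_le_ne_top (h2 ▸ h3) h1
    have hlt : ∫⁻ x, ∑' n, B' n x ∂μ ≠ ⊤ := by
      rw [lintegral_tsum fun n => (hB'm n).aemeasurable]
      exact htsum
    have hfin : ∀ᵐ x ∂μ, ∑' n, B' n x ≠ ⊤ := by
      filter_upwards [ae_lt_top (by exact Measurable.ennreal_tsum hB'm) hlt] with x hx
      exact hx.ne
    filter_upwards [hfin] with x hx
    have h0 : Tendsto (fun n => B' n x) atTop (nhds 0) :=
      ENNReal.tendsto_atTop_zero_of_tsum_ne_top hx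
    have h1 : Tendsto (fun n => (B' n x).toReal) atTop (nhds (0:ENNReal).toReal) :=
      (ENNReal.tendsto_toReal (by simp)).comp h0
    simp only [ENNReal.toReal_zero] at h1
    apply h1.congr
    intro n
    rw [hB']
    exact ENNReal.toReal_ofReal (hB0 n x)
  filter_upwards [hconv, haeB, hB3] with x hx1 hx2 hx3
  show ∃ L : ℝ, Tendsto (fun N => tAvg ⇑S ⇑T f1 f2 f3 N x) atTop (nhds L)
  apply cauchySeq_tendsto_of_complete
  rw [Metric.cauchySeq_iff]
  intro ε hε
  set K : ℝ := C1 * C2 + 1 with hKdef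
  have hK0 : 0 < K := by rw [hKdef]; nlinarith
  -- choose a good level n
  have hδB : Tendsto (fun n : ℕ => 1/((n:ℝ)+1) + Bn n x) atTop (nhds 0) := by
    have h1 : Tendsto (fun n : ℕ => 1/((n:ℝ)+1)) atTop (nhds 0) :=
      tendsto_one_div_add_atTop_nhds_zero_nat
    simpa using h1.add hx3
  have hev : ∀ᶠ n : ℕ in atTop, 1/((n:ℝ)+1) + Bn n x < ε/(8*K) :=
    hδB.eventually (eventually_lt_nhds (by positivity))
  obtain ⟨n, hn⟩ := hev.exists
  obtain ⟨Ln, hLn⟩ := hx1 n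
  -- combine the eventual bounds
  have hev1 : ∀ᶠ N : ℕ in atTop,
      ((N:ℝ)^2)⁻¹ * ∑ i ∈ Finset.range N, ∑ j ∈ Finset.range N,
        |f3 ((⇑S)^[i] ((⇑T)^[j] x)) - φn n ((⇑S)^[i] ((⇑T)^[j] x))|
        ≤ 1/((n:ℝ)+1) + Bn n x + ε/(8*K) := hx2 n (ε/(8*K)) (by positivity)
  have hev2 : ∀ᶠ N : ℕ in atTop, |tAvg ⇑S ⇑T f1 f2 (φn n) N x - Ln| < ε/8 := by
    have := hLn.eventually (Metric.ball_mem_nhds Ln (show (0:ℝ) < ε/8 by positivity))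
    filter_upwards [this] with N hN
    simpa [Metric.mem_ball, Real.dist_eq] using hN
  have hclose : ∀ᶠ N : ℕ in atTop, |tAvg ⇑S ⇑T f1 f2 f3 N x - Ln| < ε/2 := by
    filter_upwards [hev1, hev2] with N h1 h2
    have herr := tAvg_err (S := ⇑S) (T := ⇑T) (f3 := f3) (φ := φn n) hC1 hC2 hb1 hb2 N x
    have hd0 : 0 ≤ ((N:ℝ)^2)⁻¹ * ∑ i ∈ Finset.range N, ∑ j ∈ Finset.range N,
        |f3 ((⇑S)^[i] ((⇑T)^[j] x)) - φn n ((⇑S)^[i] ((⇑T)^[j] x))| := by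
      apply mul_nonneg (by positivity)
      exact Finset.sum_nonneg fun i _ => Finset.sum_nonneg fun j _ => abs_nonneg _
    have herr2 : |tAvg ⇑S ⇑T f1 f2 f3 N x - tAvg ⇑S ⇑T f1 f2 (φn n) N x|
        ≤ K * (1/((n:ℝ)+1) + Bn n x + ε/(8*K)) := by
      calc |tAvg ⇑S ⇑T f1 f2 f3 N x - tAvg ⇑S ⇑T f1 f2 (φn n) N x|
          ≤ C1 * C2 * (((N:ℝ)^2)⁻¹ * ∑ i ∈ Finset.range N, ∑ j ∈ Finset.range N,
            |f3 ((⇑S)^[i] ((⇑T)^[j] x)) - φn n ((⇑S)^[i] ((⇑T)^[j] x))|) := herr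
        _ ≤ K * (((N:ℝ)^2)⁻¹ * ∑ i ∈ Finset.range N, ∑ j ∈ Finset.range N,
            |f3 ((⇑S)^[i] ((⇑T)^[j] x)) - φn n ((⇑S)^[i] ((⇑T)^[j] x))|) := by
            apply mul_le_mul_of_nonneg_right _ hd0
            rw [hKdef]
            linarith
        _ ≤ K * (1/((n:ℝ)+1) + Bn n x + ε/(8*K)) := by
            apply mul_le_mul_of_nonneg_left h1 hK0.le
    have hKbound : K * (1/((n:ℝ)+1) + Bn n x + ε/(8*K)) < ε/4 := by
      have h3 : 1/((n:ℝ)+1) + Bn n x + ε/(8*K) < ε/(8*K) + ε/(8*K) := by linarith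
      have h4 : K * (ε/(8*K) + ε/(8*K)) = ε/4 := by
        field_simp
        ring
      calc K * (1/((n:ℝ)+1) + Bn n x + ε/(8*K)) < K * (ε/(8*K) + ε/(8*K)) := by
            apply mul_lt_mul_of_pos_left h3 hK0
        _ = ε/4 := h4
    calc |tAvg ⇑S ⇑T f1 f2 f3 N x - Ln|
        ≤ |tAvg ⇑S ⇑T f1 f2 f3 N x - tAvg ⇑S ⇑T f1 f2 (φn n) N x|
          + |tAvg ⇑S ⇑T f1 f2 (φn n) N x - Ln| := by
          have : tAvg ⇑S ⇑T f1 f2 f3 N x - Ln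
              = (tAvg ⇑S ⇑T f1 f2 f3 N x - tAvg ⇑S ⇑T f1 f2 (φn n) N x)
                + (tAvg ⇑S ⇑T f1 f2 (φn n) N x - Ln) := by ring
          rw [this]
          exact abs_add_le _ _
      _ < ε/4 + ε/8 := by
          exact add_lt_add (herr2.trans_lt hKbound) h2
      _ < ε/2 := by linarith
  obtain ⟨N₀, hN₀⟩ := eventually_atTop.1 hclose
  refine ⟨N₀, fun p hp q hq => ?_⟩
  have h1 := hN₀ p hp
  have h2 := hN₀ q hq
  rw [Real.dist_eq]
  calc |tAvg ⇑S ⇑T f1 f2 f3 p x - tAvg ⇑S ⇑T f1 f2 f3 q x|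
      ≤ |tAvg ⇑S ⇑T f1 f2 f3 p x - Ln| + |tAvg ⇑S ⇑T f1 f2 f3 q x - Ln| := by
        have : tAvg ⇑S ⇑T f1 f2 f3 p x - tAvg ⇑S ⇑T f1 f2 f3 q x
            = (tAvg ⇑S ⇑T f1 f2 f3 p x - Ln) - (tAvg ⇑S ⇑T f1 f2 f3 q x - Ln) := by ring
        rw [this]
        exact abs_sub _ _
    _ < ε/2 + ε/2 := add_lt_add h1 h2
    _ = ε := by ring
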